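/- arXiv:1602.03578 — 12 statements merged into one kernel-verified Lean document; each statement's English description precedes it below -/
import Mathlib

section
/- Under hypothesis (1.9), for every prime p the polynomial H̄ ∈ F_p[Λ_1,…,Λ_N] is nonzero. Precisely: the vector u ∈ ℕ^N with u_j = p−1 for 1 ≤ j ≤ μ+1 and u_j = 0 for μ+2 ≤ j ≤ N is the unique u ∈ ℕ^N with Σ_{j=1}^N u_j a_j^+ = (p−1)·(1,…,1,μ+1) and u_j = 0 for all j ≥ μ+2, and consequently the coefficient of Λ_1^{p−1}⋯Λ_{μ+1}^{p−1} in H̄ equals ((p−1)!)^{−(μ+1)} ≠ 0 in F_p. -/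
open Finset

/-- Under hypothesis (1.9), for every prime `p` the polynomial `H̄ ∈ F_p[Λ_1,…,Λ_N]` is
nonzero.  Precisely: the vector `u₀` with `u₀_j = p−1` for `j ≤ μ+1` and `u₀_j = 0` for
`j ≥ μ+2` is the unique `u ∈ ℕ^N` satisfying `Σ_j u_j a_j⁺ = (p−1)·(1,…,1,μ+1)` and
`u_j = 0` for all `j ≥ μ+2`, and the coefficient of `Λ_1^{p−1}⋯Λ_{μ+1}^{p−1}` in `H̄`
equals `((p−1)!)^{−(μ+1)} ≠ 0` in `F_p`.  Here `H̄` is the sum, over all `u ∈ ℕ^N` with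
`Σ_j u_j a_j⁺ = (p−1)·(1,…,1,μ+1)` (all such `u` satisfy `u_j ≤ (p−1)(μ+1)`, so the
sum may be taken over `u_j ∈ {0,…,(p−1)(μ+1)}`), of `(u_1!⋯u_N!)^{−1} Λ^u`.
(Indices `j` are 0-based: `j < μ+1` corresponds to `1 ≤ j ≤ μ+1`.) -/
theorem stmt_1 (p : ℕ) [Fact p.Prime]
    (d μ n N : ℕ) (hd : 2 ≤ d) (hn : 1 ≤ n) (hdμ : n + 1 = d * (μ + 1))
    (hN : μ + 1 ≤ N)
    (A : Fin N → Fin (n + 1) → ℕ) (hAdist : Function.Injective A)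
    (hAdeg : ∀ j, ∑ i, A j i = d)
    (h19 : ∀ i : Fin (n + 1),
      ∑ j ∈ Finset.univ.filter (fun j : Fin N => (j : ℕ) < μ + 1), A j i = 1)
    (u₀ : Fin N → ℕ) (hu₀ : u₀ = fun j : Fin N => if (j : ℕ) < μ + 1 then p - 1 else 0)
    (Hbar : MvPolynomial (Fin N) (ZMod p))
    (hHbar : Hbar = ∑ u : Fin N → Fin ((p - 1) * (μ + 1) + 1),
      if (∀ i : Fin (n + 1), ∑ j, (u j : ℕ) * A j i = p - 1) ∧
          (∑ j, (u j : ℕ)) = (p - 1) * (μ + 1)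
      then MvPolynomial.C ((∏ j, (((u j : ℕ).factorial : ℕ) : ZMod p))⁻¹) *
        MvPolynomial.monomial (Finsupp.equivFunOnFinite.symm fun j => (u j : ℕ)) 1
      else 0) :
    ((∀ i : Fin (n + 1), ∑ j, u₀ j * A j i = p - 1) ∧
      (∑ j, u₀ j) = (p - 1) * (μ + 1)) ∧
    (∀ u : Fin N → ℕ,
      (∀ i : Fin (n + 1), ∑ j, u j * A j i = p - 1) →
      (∑ j, u j) = (p - 1) * (μ + 1) →
      (∀ j : Fin N, μ + 1 ≤ (j : ℕ) → u j = 0) → u = u₀) ∧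
    Hbar.coeff (Finsupp.equivFunOnFinite.symm u₀)
      = ((((p - 1).factorial : ℕ) : ZMod p)⁻¹) ^ (μ + 1) ∧
    Hbar.coeff (Finsupp.equivFunOnFinite.symm u₀) ≠ 0 ∧
    Hbar ≠ 0 := by
  have hp : p.Prime := Fact.out
  -- cardinality of the index set {j : ↑j < μ+1}
  have hcard : (univ.filter (fun j : Fin N => (j:ℕ) < μ + 1)).card = μ + 1 := by
    have h : (univ.filter (fun j : Fin N => (j:ℕ) < μ + 1)) =
        (Finset.range (μ+1)).attachFin
          (fun m hm => lt_of_lt_of_le (Finset.mem_range.mp hm) hN) := by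
      ext j; simp [Finset.mem_attachFin]
    rw [h, Finset.card_attachFin, Finset.card_range]
  -- Claim 1
  have claim1 : (∀ i : Fin (n + 1), ∑ j, u₀ j * A j i = p - 1) ∧
      (∑ j, u₀ j) = (p - 1) * (μ + 1) := by
    subst hu₀
    constructor
    · intro i
      calc ∑ j : Fin N, (if (j:ℕ) < μ + 1 then p - 1 else 0) * A j i
          = ∑ j : Fin N, (if (j:ℕ) < μ + 1 then (p-1) * A j i else 0) := by
            apply Finset.sum_congr rfl; intro j _; split <;> simp
        _ = ∑ j ∈ univ.filter (fun j : Fin N => (j:ℕ) < μ + 1), (p-1) * A j i := by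
            rw [Finset.sum_filter]
        _ = (p-1) * ∑ j ∈ univ.filter (fun j : Fin N => (j:ℕ) < μ + 1), A j i := by
            rw [Finset.mul_sum]
        _ = p - 1 := by rw [h19 i, mul_one]
    · rw [← Finset.sum_filter, Finset.sum_const, hcard, smul_eq_mul, mul_comm]
  -- Claim 2 : uniqueness
  have claim2 : ∀ u : Fin N → ℕ,
      (∀ i : Fin (n + 1), ∑ j, u j * A j i = p - 1) →
      (∑ j, u j) = (p - 1) * (μ + 1) →
      (∀ j : Fin N, μ + 1 ≤ (j : ℕ) → u j = 0) → u = u₀ := by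
    intro u hui _ hz
    subst hu₀
    funext j
    by_cases hj : (j : ℕ) < μ + 1
    · simp only [hj, if_true]
      obtain ⟨i, hi⟩ : ∃ i, 1 ≤ A j i := by
        by_contra h
        push_neg at h
        have : ∑ i, A j i = 0 := Finset.sum_eq_zero fun i _ => Nat.lt_one_iff.mp (h i)
        rw [hAdeg j] at this; omega
      have hjmem : j ∈ univ.filter (fun j : Fin N => (j : ℕ) < μ + 1) := by
        simp [hj]; omega
      have hsplit := Finset.add_sum_erase _ (fun j' => A j' i) hjmem
      beta_reduce at hsplit
      rw [h19 i] at hsplit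
      have hrest : ∀ j' ∈ (univ.filter (fun j : Fin N => (j : ℕ) < μ + 1)).erase j,
          A j' i = 0 := by
        intro j' hj'
        have h0 : ∑ j'' ∈ (univ.filter (fun j : Fin N => (j : ℕ) < μ + 1)).erase j,
            A j'' i = 0 := by omega
        exact Finset.sum_eq_zero_iff.mp h0 j' hj'
      have hAji : A j i = 1 := by omega
      have hs := hui i
      rw [Finset.sum_eq_single j] at hs
      · rw [hAji, mul_one] at hs; exact hs
      · intro j' _ hne
        by_cases hj' : (j' : ℕ) < μ + 1
        · have : A j' i = 0 := hrest j' (by simp [Finset.mem_erase, hne, hj']; omega)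
          rw [this, mul_zero]
        · rw [hz j' (not_lt.mp hj'), zero_mul]
      · intro h; exact absurd (Finset.mem_univ j) h
    · simp [hj, hz j (not_lt.mp hj)]
  -- the bounded version of u₀
  have hbound : ∀ j : Fin N, u₀ j < (p - 1) * (μ + 1) + 1 := by
    intro j; rw [hu₀]; dsimp only; split
    · have : p - 1 ≤ (p - 1) * (μ + 1) := Nat.le_mul_of_pos_right _ (by omega)
      omega
    · omega
  set u₁ : Fin N → Fin ((p - 1) * (μ + 1) + 1) := fun j => ⟨u₀ j, hbound j⟩ with hu₁
  have hu₁val : ∀ j, ((u₁ j : ℕ)) = u₀ j := fun j => rfl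
  -- coefficient computation
  have hfactne : (((p - 1).factorial : ℕ) : ZMod p) ≠ 0 := by
    rw [Ne, ZMod.natCast_eq_zero_iff]
    intro hdvd
    have := (Nat.Prime.dvd_factorial hp).mp hdvd
    have := hp.two_le
    omega
  have hcoeff : Hbar.coeff (Finsupp.equivFunOnFinite.symm u₀)
      = ((((p - 1).factorial : ℕ) : ZMod p)⁻¹) ^ (μ + 1) := by
    rw [hHbar, MvPolynomial.coeff_sum]
    rw [Finset.sum_eq_single u₁]
    · rw [if_pos ⟨fun i => claim1.1 i, claim1.2⟩]
      rw [MvPolynomial.coeff_C_mul, MvPolynomial.coeff_monomial, if_pos rfl, mul_one]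
      have hprod : (∏ j : Fin N, (((u₁ j : ℕ).factorial : ℕ) : ZMod p))
          = (((p - 1).factorial : ℕ) : ZMod p) ^ (μ + 1) := by
        calc ∏ j : Fin N, (((u₁ j : ℕ).factorial : ℕ) : ZMod p)
            = ∏ j : Fin N, (if (j:ℕ) < μ + 1
                then (((p-1).factorial : ℕ) : ZMod p) else 1) := by
              apply Finset.prod_congr rfl; intro j _
              rw [hu₁val j, hu₀]; dsimp only; split <;> simp
          _ = (((p-1).factorial : ℕ) : ZMod p) ^ (μ + 1) := by
              rw [Finset.prod_ite, Finset.prod_const, Finset.prod_const_one, mul_one,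
                hcard]
      rw [hprod, ← inv_pow]
    · intro u _ hne
      split
      · rw [MvPolynomial.coeff_C_mul, MvPolynomial.coeff_monomial]
        rw [if_neg, mul_zero]
        intro heq
        apply hne
        have heq2 : (fun j => ((u j : ℕ))) = u₀ := Finsupp.equivFunOnFinite.symm.injective heq
        funext j
        exact Fin.ext ((congrFun heq2 j).trans (hu₁val j).symm)
      · simp
    · intro h; exact absurd (Finset.mem_univ u₁) h
  have hne0 : Hbar.coeff (Finsupp.equivFunOnFinite.symm u₀) ≠ 0 := by
    rw [hcoeff]
    exact pow_ne_zero _ (inv_ne_zero hfactne)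
  exact ⟨claim1, claim2, hcoeff, hne0, fun h => hne0 (by rw [h, MvPolynomial.coeff_zero])⟩
end

section
/- (Lemma 4.10, arithmetic form.) Assume the combinatorial setup with hypothesis (1.9). Let l = (l_1,…,l_N) ∈ ℤ^N satisfy l_j ≤ 0 for 1 ≤ j ≤ μ+1 and l_j ≥ 0 for μ+2 ≤ j ≤ N, and suppose that every coordinate of the vector b + Σ_{j=1}^N l_j a_j^+ ∈ ℤ^{n+2} is negative. Then the integer ∏_{j=μ+2}^N l_j! divides the integer ∏_{j=1}^{μ+1} (−l_j)!. (Equivalently: all coefficients of the A-hypergeometric series F_u(Λ) of equation (4.4) are integers, for every u ∈ M_-.) -/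
open Finset

/-- Lemma 4.10, arithmetic form.  With `a_j⁺ = (a_j,1)` and `b = (−1,…,−1,−μ−1)`, suppose
`l ∈ ℤ^N` has `l_j ≤ 0` for `j ≤ μ+1` and `l_j ≥ 0` for `j ≥ μ+2`, and every coordinate of
`b + Σ_j l_j a_j⁺` is negative (coordinatewise: `−1 + Σ_j l_j a_{ij} < 0` for `0 ≤ i ≤ n` and
`−(μ+1) + Σ_j l_j < 0`).  Then `∏_{j=μ+2}^N l_j!` divides `∏_{j=1}^{μ+1} (−l_j)!`.
(Indices `j` are 0-based: `j < μ+1` corresponds to `1 ≤ j ≤ μ+1`.) -/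
theorem stmt_3 (d μ n N : ℕ) (hd : 2 ≤ d) (hn : 1 ≤ n) (hdμ : n + 1 = d * (μ + 1))
    (hN : μ + 1 ≤ N)
    (A : Fin N → Fin (n + 1) → ℕ) (hAdist : Function.Injective A)
    (hAdeg : ∀ j, ∑ i, A j i = d)
    (h19 : ∀ i : Fin (n + 1),
      ∑ j ∈ Finset.univ.filter (fun j : Fin N => (j : ℕ) < μ + 1), A j i = 1)
    (l : Fin N → ℤ)
    (hlneg : ∀ j : Fin N, (j : ℕ) < μ + 1 → l j ≤ 0)
    (hlpos : ∀ j : Fin N, μ + 1 ≤ (j : ℕ) → 0 ≤ l j)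
    (hcoord : ∀ i : Fin (n + 1), (-1 : ℤ) + ∑ j, l j * (A j i : ℤ) < 0)
    (hlast : -((μ : ℤ) + 1) + ∑ j, l j < 0) :
    (∏ j ∈ Finset.univ.filter (fun j : Fin N => μ + 1 ≤ (j : ℕ)), (l j).toNat.factorial) ∣
      (∏ j ∈ Finset.univ.filter (fun j : Fin N => (j : ℕ) < μ + 1), (-(l j)).toNat.factorial) := by
  classical
  set P := Finset.univ.filter (fun j : Fin N => (j : ℕ) < μ + 1) with hP
  set Q := Finset.univ.filter (fun j : Fin N => μ + 1 ≤ (j : ℕ)) with hQ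
  set m : Fin N → ℕ := fun j => (-(l j)).toNat with hm
  set L : Fin N → ℕ := fun j => (l j).toNat with hLdef
  -- column structure from h19
  have hcol : ∀ i : Fin (n + 1), ∃ j0 ∈ P, A j0 i = 1 ∧ ∀ j ∈ P, j ≠ j0 → A j i = 0 := by
    intro i
    have h1 : ∑ j ∈ P, A j i = 1 := h19 i
    obtain ⟨j0, hj0, hne⟩ := Finset.exists_ne_zero_of_sum_ne_zero (by omega : ∑ j ∈ P, A j i ≠ 0)
    have hsplit : A j0 i + ∑ j ∈ P.erase j0, A j i = 1 := by
      have h2 : A j0 i + ∑ j ∈ P.erase j0, A j i = ∑ j ∈ P, A j i :=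
        Finset.add_sum_erase P (fun j => A j i) hj0
      omega
    have hz : ∑ j ∈ P.erase j0, A j i = 0 := by omega
    refine ⟨j0, hj0, by omega, fun j hj hjne => ?_⟩
    have := Finset.sum_eq_zero_iff.mp hz j (Finset.mem_erase.mpr ⟨hjne, hj⟩)
    exact this
  -- per-column inequality with division
  have key : ∀ q : ℕ, 0 < q → ∀ i : Fin (n + 1),
      ∑ k ∈ Q, A k i * (L k / q) ≤ ∑ j ∈ P, A j i * (m j / q) := by
    intro q hq i
    obtain ⟨j0, hj0, hj01, hj00⟩ := hcol i
    -- integer inequality from hcoord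
    have hsum0 : ∑ j, l j * (A j i : ℤ) ≤ 0 := by
      have := hcoord i; omega
    have hQnot : Q = Finset.univ.filter (fun j : Fin N => ¬ ((j : ℕ) < μ + 1)) := by
      rw [hQ]; apply Finset.filter_congr; intro j _; omega
    have hsplit : ∑ j ∈ P, l j * (A j i : ℤ) + ∑ j ∈ Q, l j * (A j i : ℤ)
        = ∑ j, l j * (A j i : ℤ) := by
      rw [hQnot, hP]
      exact Finset.sum_filter_add_sum_filter_not _ _ _
    have hPsum : ∑ j ∈ P, l j * (A j i : ℤ) = l j0 := by
      rw [Finset.sum_eq_single_of_mem j0 hj0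
        (fun b hb hbne => by simp [hj00 b hb hbne])]
      simp [hj01]
    have hQle : ∑ k ∈ Q, l k * (A k i : ℤ) ≤ -(l j0) := by
      rw [hPsum] at hsplit; omega
    -- natural number version
    have hj0neg : l j0 ≤ 0 := hlneg j0 (by simpa [hP] using hj0)
    have hnat : ∑ k ∈ Q, L k * A k i ≤ m j0 := by
      have hcast : ((∑ k ∈ Q, L k * A k i : ℕ) : ℤ) = ∑ k ∈ Q, l k * (A k i : ℤ) := by
        push_cast
        refine Finset.sum_congr rfl (fun k hk => ?_)
        have hk' : 0 ≤ l k := hlpos k (by simpa [hQ] using hk)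
        rw [hLdef]
        rw [Int.toNat_of_nonneg hk']
      have hm0 : ((m j0 : ℕ) : ℤ) = -(l j0) := by
        rw [hm]; simp [Int.toNat_of_nonneg (by omega : (0:ℤ) ≤ -(l j0))]
      have := hQle
      rw [← hcast, ← hm0] at this
      exact_mod_cast this
    have hRHS : ∑ j ∈ P, A j i * (m j / q) = m j0 / q := by
      rw [Finset.sum_eq_single_of_mem j0 hj0
        (fun b hb hbne => by simp [hj00 b hb hbne])]
      rw [hj01]; simp
    rw [hRHS]
    rw [Nat.le_div_iff_mul_le hq]
    calc (∑ k ∈ Q, A k i * (L k / q)) * q = ∑ k ∈ Q, A k i * (L k / q) * q := by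
          rw [Finset.sum_mul]
      _ ≤ ∑ k ∈ Q, L k * A k i := by
          refine Finset.sum_le_sum (fun k _ => ?_)
          calc A k i * (L k / q) * q = A k i * (L k / q * q) := by ring
            _ ≤ A k i * L k := Nat.mul_le_mul_left _ (Nat.div_mul_le_self _ _)
            _ = L k * A k i := Nat.mul_comm _ _
      _ ≤ m j0 := hnat
  -- global inequality for each q
  have glob : ∀ q : ℕ, 0 < q → ∑ k ∈ Q, L k / q ≤ ∑ j ∈ P, m j / q := by
    intro q hq
    have hmul : d * ∑ k ∈ Q, L k / q ≤ d * ∑ j ∈ P, m j / q := by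
      calc d * ∑ k ∈ Q, L k / q = ∑ k ∈ Q, (L k / q) * d := by
            rw [Finset.mul_sum]; exact Finset.sum_congr rfl (fun k _ => Nat.mul_comm _ _)
        _ = ∑ k ∈ Q, ∑ i, A k i * (L k / q) := by
            refine Finset.sum_congr rfl (fun k _ => ?_)
            rw [← hAdeg k, Finset.mul_sum]
            exact Finset.sum_congr rfl (fun i _ => Nat.mul_comm _ _)
        _ = ∑ i, ∑ k ∈ Q, A k i * (L k / q) := Finset.sum_comm
        _ ≤ ∑ i, ∑ j ∈ P, A j i * (m j / q) := Finset.sum_le_sum (fun i _ => key q hq i)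
        _ = ∑ j ∈ P, ∑ i, A j i * (m j / q) := Finset.sum_comm
        _ = ∑ j ∈ P, (m j / q) * d := by
            refine Finset.sum_congr rfl (fun j _ => ?_)
            rw [← hAdeg j, Finset.mul_sum]
            exact Finset.sum_congr rfl (fun i _ => Nat.mul_comm _ _)
        _ = d * ∑ j ∈ P, m j / q := by
            rw [Finset.mul_sum]; exact Finset.sum_congr rfl (fun j _ => Nat.mul_comm _ _)
    exact Nat.le_of_mul_le_mul_left hmul (by omega)
  -- conclude divisibility via factorizations
  have hane : ∀ k ∈ Q, (L k).factorial ≠ 0 := fun k _ => (Nat.factorial_pos _).ne'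
  have hbne : ∀ j ∈ P, (m j).factorial ≠ 0 := fun j _ => (Nat.factorial_pos _).ne'
  rw [← Nat.factorization_le_iff_dvd (Finset.prod_ne_zero_iff.mpr hane)
    (Finset.prod_ne_zero_iff.mpr hbne)]
  rw [Nat.factorization_prod hane, Nat.factorization_prod hbne]
  intro p
  rw [Finset.sum_apply', Finset.sum_apply']
  by_cases hp : p.Prime
  · haveI : Fact p.Prime := ⟨hp⟩
    set b0 : ℕ := (∑ k ∈ Q, L k) + (∑ j ∈ P, m j) + 1 with hb0
    have hfacL : ∀ k ∈ Q, ((L k).factorial).factorization p = ∑ i ∈ Finset.Ico 1 b0, L k / p ^ i := by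
      intro k hk
      rw [Nat.factorization_def _ hp]
      refine padicValNat_factorial ?_
      have h1 : L k ≤ ∑ k ∈ Q, L k := Finset.single_le_sum (fun _ _ => Nat.zero_le _) hk
      have := Nat.log_le_self p (L k); omega
    have hfacm : ∀ j ∈ P, ((m j).factorial).factorization p = ∑ i ∈ Finset.Ico 1 b0, m j / p ^ i := by
      intro j hj
      rw [Nat.factorization_def _ hp]
      refine padicValNat_factorial ?_
      have h1 : m j ≤ ∑ j ∈ P, m j := Finset.single_le_sum (fun _ _ => Nat.zero_le _) hj
      have := Nat.log_le_self p (m j); omega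
    rw [Finset.sum_congr rfl hfacL, Finset.sum_congr rfl hfacm]
    rw [Finset.sum_comm, Finset.sum_comm (s := P)]
    refine Finset.sum_le_sum (fun i _ => glob _ (Nat.pow_pos hp.pos))
  · simp [Nat.factorization_eq_zero_of_not_prime _ hp]
end

section
/- (Lemma 4.13, arithmetic form.) Assume the combinatorial setup with hypothesis (1.9). Let l = (l_1,…,l_N) ∈ ℤ^N satisfy l_j ≤ 0 for 1 ≤ j ≤ μ+1 and l_j ≥ 0 for μ+2 ≤ j ≤ N, and suppose every coordinate of u := b + Σ_{j=1}^N l_j a_j^+ ∈ ℤ^{n+2} is negative. Let k = (k_1,…,k_N) ∈ ℕ^N be such that every coordinate of u + Σ_{j=1}^N k_j a_j^+ is also negative. Then the integer (∏_{j=1}^N k_j!)·(∏_{j=μ+2}^N l_j!) divides the integer ∏_{j=1}^{μ+1} (−l_j)!. (Equivalently: every coefficient of F_u(Λ) is divisible by ∏_{j=1}^N k_j!, hence by the least common multiple K_u of these products.) -/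
open Finset

/-- If a finset sum of naturals equals 1, there is a unique support element, and
weighted sums collapse. -/
lemma aux_sum_eq_one {α : Type*} [DecidableEq α] (s : Finset α) (g : α → ℕ)
    (h : ∑ x ∈ s, g x = 1) :
    ∃ t ∈ s, ∀ f : α → ℕ, ∑ x ∈ s, f x * g x = f t := by
  obtain ⟨t, ht, hgt⟩ : ∃ t ∈ s, g t ≠ 0 := by
    by_contra hc
    push_neg at hc
    rw [Finset.sum_eq_zero hc] at h
    omega
  refine ⟨t, ht, fun f => ?_⟩
  rw [← Finset.add_sum_erase _ g ht] at h
  have h1 : g t = 1 := by omega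
  have h2 : ∑ x ∈ s.erase t, g x = 0 := by omega
  rw [← Finset.add_sum_erase _ (fun x => f x * g x) ht, h1, mul_one,
    Finset.sum_eq_zero, add_zero]
  intro x hx
  have := (Finset.sum_eq_zero_iff).mp h2 x hx
  simp [this]

/-- Lemma 4.13, arithmetic form.  With the setup of Lemma 4.10, let additionally
`k ∈ ℕ^N` be such that every coordinate of `u + Σ_j k_j a_j⁺` is also negative, where
`u = b + Σ_j l_j a_j⁺`.  Then `(∏_{j=1}^N k_j!)·(∏_{j=μ+2}^N l_j!)` divides
`∏_{j=1}^{μ+1} (−l_j)!`.  (Indices `j` are 0-based: `j < μ+1` means `1 ≤ j ≤ μ+1`.) -/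
theorem stmt_4 (d μ n N : ℕ) (hd : 2 ≤ d) (hn : 1 ≤ n) (hdμ : n + 1 = d * (μ + 1))
    (hN : μ + 1 ≤ N)
    (A : Fin N → Fin (n + 1) → ℕ) (hAdist : Function.Injective A)
    (hAdeg : ∀ j, ∑ i, A j i = d)
    (h19 : ∀ i : Fin (n + 1),
      ∑ j ∈ Finset.univ.filter (fun j : Fin N => (j : ℕ) < μ + 1), A j i = 1)
    (l : Fin N → ℤ)
    (hlneg : ∀ j : Fin N, (j : ℕ) < μ + 1 → l j ≤ 0)
    (hlpos : ∀ j : Fin N, μ + 1 ≤ (j : ℕ) → 0 ≤ l j)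
    (hcoord : ∀ i : Fin (n + 1), (-1 : ℤ) + ∑ j, l j * (A j i : ℤ) < 0)
    (hlast : -((μ : ℤ) + 1) + ∑ j, l j < 0)
    (k : Fin N → ℕ)
    (hkcoord : ∀ i : Fin (n + 1),
      ((-1 : ℤ) + ∑ j, l j * (A j i : ℤ)) + ∑ j, (k j : ℤ) * (A j i : ℤ) < 0)
    (hklast : (-((μ : ℤ) + 1) + ∑ j, l j) + ∑ j, (k j : ℤ) < 0) :
    ((∏ j, (k j).factorial) *
        ∏ j ∈ Finset.univ.filter (fun j : Fin N => μ + 1 ≤ (j : ℕ)), (l j).toNat.factorial) ∣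
      (∏ j ∈ Finset.univ.filter (fun j : Fin N => (j : ℕ) < μ + 1), (-(l j)).toNat.factorial) := by
  classical
  set B : Finset (Fin N) := Finset.univ.filter (fun j : Fin N => (j : ℕ) < μ + 1) with hBdef
  set w : Fin N → ℕ := fun j => k j + (l j).toNat with hwdef
  set m : Fin N → ℕ := fun j => (-(l j)).toNat with hmdef
  -- Step 1: per-coordinate inequality in ℕ.
  have key1 : ∀ i : Fin (n + 1), ∑ j, w j * A j i ≤ ∑ t ∈ B, m t * A t i := by
    intro i
    have h1 := hkcoord i
    have h2 : (∑ j, l j * (A j i : ℤ)) + ∑ j, (k j : ℤ) * (A j i : ℤ) ≤ 0 := by omega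
    have hpt : ∀ j : Fin N, ((w j : ℤ)) * (A j i : ℤ) =
        (l j * (A j i : ℤ) + (k j : ℤ) * (A j i : ℤ)) +
          (if (j : ℕ) < μ + 1 then (m j : ℤ) * (A j i : ℤ) else 0) := by
      intro j
      by_cases hj : (j : ℕ) < μ + 1
      · have hl := hlneg j hj
        have e1 : (l j).toNat = 0 := Int.toNat_of_nonpos hl
        have e2 : ((-(l j)).toNat : ℤ) = -(l j) := Int.toNat_of_nonneg (by omega)
        simp only [if_pos hj, hwdef, hmdef, e1, e2]
        push_cast
        ring
      · have hl := hlpos j (by omega)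
        have e1 : ((l j).toNat : ℤ) = l j := Int.toNat_of_nonneg hl
        simp only [if_neg hj, hwdef]
        push_cast
        rw [e1]
        ring
    have hsum : (∑ j, (w j : ℤ) * (A j i : ℤ)) =
        ((∑ j, l j * (A j i : ℤ)) + ∑ j, (k j : ℤ) * (A j i : ℤ)) +
          ∑ t ∈ B, (m t : ℤ) * (A t i : ℤ) := by
      rw [Finset.sum_congr rfl (fun j _ => hpt j), Finset.sum_add_distrib,
        Finset.sum_add_distrib, hBdef, Finset.sum_filter]
    have : (∑ j, (w j : ℤ) * (A j i : ℤ)) ≤ ∑ t ∈ B, (m t : ℤ) * (A t i : ℤ) := by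
      rw [hsum]; linarith
    exact_mod_cast this
  -- Step 2: floored per-coordinate inequality.
  have key2 : ∀ q : ℕ, 0 < q → ∀ i : Fin (n + 1),
      ∑ j, (w j / q) * A j i ≤ ∑ t ∈ B, (m t / q) * A t i := by
    intro q hq i
    obtain ⟨t0, ht0, hF⟩ := aux_sum_eq_one B (fun t => A t i) (h19 i)
    have hm0 : ∑ t ∈ B, m t * A t i = m t0 := hF m
    have hmq : ∑ t ∈ B, (m t / q) * A t i = m t0 / q := hF (fun t => m t / q)
    rw [hmq]
    rw [Nat.le_div_iff_mul_le hq]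
    calc (∑ j, (w j / q) * A j i) * q = ∑ j, q * (w j / q) * A j i := by
          rw [Finset.sum_mul]; apply Finset.sum_congr rfl; intros; ring
      _ ≤ ∑ j, w j * A j i := by
          apply Finset.sum_le_sum; intro j _
          exact Nat.mul_le_mul_right _ (Nat.mul_div_le (w j) q)
      _ ≤ m t0 := by rw [← hm0]; exact key1 i
  -- Step 3: global floored inequality.
  have key3 : ∀ q : ℕ, 0 < q → ∑ j, w j / q ≤ ∑ t ∈ B, m t / q := by
    intro q hq
    have hsum := Finset.sum_le_sum (fun i (_ : i ∈ (Finset.univ : Finset (Fin (n+1)))) => key2 q hq i)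
    have hL : ∑ i : Fin (n+1), ∑ j, (w j / q) * A j i = (∑ j, w j / q) * d := by
      rw [Finset.sum_comm, Finset.sum_mul]
      apply Finset.sum_congr rfl
      intro j _
      rw [← Finset.mul_sum, hAdeg j]
    have hR : ∑ i : Fin (n+1), ∑ t ∈ B, (m t / q) * A t i = (∑ t ∈ B, m t / q) * d := by
      rw [Finset.sum_comm, Finset.sum_mul]
      apply Finset.sum_congr rfl
      intro t _
      rw [← Finset.mul_sum, hAdeg t]
    rw [hL, hR] at hsum
    exact Nat.le_of_mul_le_mul_right hsum (by omega)
  -- Step 4: factorial product divisibility via Legendre.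
  have key4 : (∏ j, (w j).factorial) ∣ ∏ t ∈ B, (m t).factorial := by
    have hL0 : (∏ j, (w j).factorial) ≠ 0 :=
      Finset.prod_ne_zero_iff.mpr (fun j _ => (Nat.factorial_pos _).ne')
    have hR0 : (∏ t ∈ B, (m t).factorial) ≠ 0 :=
      Finset.prod_ne_zero_iff.mpr (fun t _ => (Nat.factorial_pos _).ne')
    rw [← Nat.factorization_le_iff_dvd hL0 hR0]
    intro p
    by_cases hp : p.Prime
    · haveI : Fact p.Prime := ⟨hp⟩
      set b : ℕ := (∑ j, w j) + (∑ t ∈ B, m t) + 1 with hbdef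
      have hfL : (∏ j, (w j).factorial).factorization p = ∑ j, ∑ r ∈ Finset.Ico 1 b, w j / p ^ r := by
        rw [Nat.factorization_prod (fun j _ => (Nat.factorial_pos _).ne')]
        rw [Finset.sum_apply']
        apply Finset.sum_congr rfl
        intro j _
        rw [Nat.factorization_def _ hp]
        apply padicValNat_factorial
        calc Nat.log p (w j) ≤ w j := Nat.log_le_self p (w j)
          _ ≤ ∑ j, w j := Finset.single_le_sum (fun _ _ => Nat.zero_le _) (Finset.mem_univ j)
          _ < b := by omega
      have hfR : (∏ t ∈ B, (m t).factorial).factorization p = ∑ t ∈ B, ∑ r ∈ Finset.Ico 1 b, m t / p ^ r := by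
        rw [Nat.factorization_prod (fun t _ => (Nat.factorial_pos _).ne')]
        rw [Finset.sum_apply']
        apply Finset.sum_congr rfl
        intro t ht
        rw [Nat.factorization_def _ hp]
        apply padicValNat_factorial
        calc Nat.log p (m t) ≤ m t := Nat.log_le_self p (m t)
          _ ≤ ∑ t ∈ B, m t := Finset.single_le_sum (fun _ _ => Nat.zero_le _) ht
          _ < b := by omega
      rw [hfL, hfR, Finset.sum_comm, Finset.sum_comm (s := B)]
      apply Finset.sum_le_sum
      intro r _
      exact key3 (p ^ r) (pow_pos hp.pos r)
    · rw [Nat.factorization_eq_zero_of_not_prime _ hp]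
      exact Nat.zero_le _
  -- Step 5: combine.
  have key5 : ((∏ j, (k j).factorial) *
      ∏ j ∈ Finset.univ.filter (fun j : Fin N => μ + 1 ≤ (j : ℕ)), (l j).toNat.factorial) ∣
      ∏ j, (w j).factorial := by
    have e1 : ∏ j ∈ Finset.univ.filter (fun j : Fin N => μ + 1 ≤ (j : ℕ)), (l j).toNat.factorial
        = ∏ j, (l j).toNat.factorial := by
      apply Finset.prod_subset (Finset.subset_univ _)
      intro j _ hj
      simp only [Finset.mem_filter, Finset.mem_univ, true_and, not_le] at hj
      rw [Int.toNat_of_nonpos (hlneg j hj)]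
      rfl
    rw [e1, ← Finset.prod_mul_distrib]
    apply Finset.prod_dvd_prod_of_dvd
    intro j _
    exact Nat.factorial_mul_factorial_dvd_factorial_add (k j) ((l j).toNat)
  exact dvd_trans key5 key4
end

section
/- (Congruence (3.24).) With γ_0 as in the context, one has |γ_0^{p−1} + p| ≤ p^{−2}; that is, γ_0^{p−1} ≡ −p modulo elements of absolute value at most p^{−2}. -/
open Finset

lemma stmt5_nat_aux (q n : ℕ) (hq : 1 ≤ q) (hn : 2 ≤ n) :
    (n + 1) * q + 1 ≤ (q + 1) ^ n := by
  induction n, hn using Nat.le_induction with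
  | base => nlinarith
  | succ n hn ih =>
      have h1 : 1 ≤ (q + 1) ^ n := Nat.one_le_pow _ _ (by omega)
      calc (n + 1 + 1) * q + 1 = ((n + 1) * q + 1) + q := by ring
        _ ≤ (q + 1) ^ n + q * (q + 1) ^ n := by nlinarith
        _ = (q + 1) ^ (n + 1) := by ring

/-- Congruence (3.24): `γ₀^{p−1} ≡ −p` modulo elements of absolute value at most `p^{−2}`,
i.e. `|γ₀^{p−1} + p| ≤ p^{−2}`. Here `K` is a complete nonarchimedean valued field of
characteristic zero with `|p| = p⁻¹`, and `γ₀` is a root of `Σ_{i≥0} t^{p^i}/p^i`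
with `|γ₀| = p^{−1/(p−1)}`. -/
theorem stmt_5 (p : ℕ) (hp : p.Prime)
    (K : Type*) [NormedField K] [CompleteSpace K] [CharZero K]
    (hna : ∀ x y : K, ‖x + y‖ ≤ max ‖x‖ ‖y‖)
    (hpnorm : ‖(p : K)‖ = ((p : ℝ))⁻¹)
    (γ₀ : K) (hγ₀ : ‖γ₀‖ = (p : ℝ) ^ (-(1 : ℝ) / ((p : ℝ) - 1)))
    (hroot : HasSum (fun i : ℕ => γ₀ ^ p ^ i / (p : K) ^ i) 0) :
    ‖γ₀ ^ (p - 1) + (p : K)‖ ≤ ((p : ℝ) ^ 2)⁻¹ := by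
  haveI : IsUltrametricDist K :=
    IsUltrametricDist.isUltrametricDist_of_forall_norm_add_le_max_norm hna
  have hp2 : 2 ≤ p := hp.two_le
  have hpR : (1 : ℝ) < (p : ℝ) := by exact_mod_cast hp.one_lt
  have hppos : (0 : ℝ) < (p : ℝ) := by linarith
  have hpm1 : (0 : ℝ) < (p : ℝ) - 1 := by linarith
  have hpK : (p : K) ≠ 0 := by exact_mod_cast hp.ne_zero
  have hγpos : (0 : ℝ) < ‖γ₀‖ := by
    rw [hγ₀]; exact Real.rpow_pos_of_pos hppos _
  have hγne : γ₀ ≠ 0 := fun h => by simp [h] at hγpos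
  set f : ℕ → K := fun i => γ₀ ^ p ^ i / (p : K) ^ i with hf
  -- norm of f n
  have hnormf : ∀ n : ℕ, ‖f n‖ = (p : ℝ) ^ ((n : ℝ) - (p : ℝ) ^ n / ((p : ℝ) - 1)) := by
    intro n
    have h1 : ‖f n‖ = ‖γ₀‖ ^ (p ^ n) / ‖(p : K)‖ ^ n := by
      rw [hf]; simp [norm_div, norm_pow]
    have h2 : ((p : ℝ)⁻¹) ^ n = (p : ℝ) ^ (-(n : ℝ)) := by
      rw [inv_pow, ← Real.rpow_natCast (p : ℝ) n, ← Real.rpow_neg hppos.le]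
    rw [h1, hγ₀, hpnorm, ← Real.rpow_natCast ((p:ℝ) ^ (-(1:ℝ)/((p:ℝ)-1))) (p ^ n),
      ← Real.rpow_mul hppos.le, h2, ← Real.rpow_sub hppos]
    congr 1
    push_cast
    ring
  -- the tail sum
  have hg : HasSum (fun i : ℕ => f (i + 2)) (-(f 0 + f 1)) := by
    rw [hasSum_nat_add_iff 2]
    have : (-(f 0 + f 1) + ∑ i ∈ Finset.range 2, f i) = 0 := by
      rw [Finset.sum_range_succ, Finset.sum_range_one]; ring
    rw [this]; exact hroot
  -- bound each tail term
  set C : ℝ := (p : ℝ) ^ (-(1:ℝ) - 1 / ((p : ℝ) - 1)) with hC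
  have hCpos : 0 < C := Real.rpow_pos_of_pos hppos _
  have htail : ∀ i : ℕ, ‖f (i + 2)‖ ≤ C := by
    intro i
    rw [hnormf, hC, Real.rpow_le_rpow_left_iff hpR]
    set n := i + 2 with hn
    have hkey : ((n : ℝ) + 1) * ((p : ℝ) - 1) + 1 ≤ (p : ℝ) ^ n := by
      have h := stmt5_nat_aux (p - 1) n (by omega) (by omega)
      have hq : (p - 1 : ℕ) + 1 = p := by omega
      rw [hq] at h
      have h' : ((n + 1) * (p - 1) + 1 : ℕ) ≤ ((p : ℕ) : ℕ) ^ n := h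
      calc ((n : ℝ) + 1) * ((p : ℝ) - 1) + 1
          = (((n + 1) * (p - 1) + 1 : ℕ) : ℝ) := by
            push_cast [Nat.cast_sub (by omega : 1 ≤ p)]
            ring
        _ ≤ ((p ^ n : ℕ) : ℝ) := by exact_mod_cast h'
        _ = (p : ℝ) ^ n := by push_cast; ring
    rw [← mul_le_mul_iff_of_pos_right hpm1, sub_mul, sub_mul,
      div_mul_cancel₀ _ hpm1.ne', div_mul_cancel₀ _ hpm1.ne']
    nlinarith [hkey]
  have hSC : ‖∑' i, f (i + 2)‖ ≤ C :=
    IsUltrametricDist.norm_tsum_le_of_forall_le_of_nonneg hCpos.le htail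
  rw [hg.tsum_eq, norm_neg] at hSC
  -- algebraic identity
  have h01 : γ₀ ^ (p - 1) * γ₀ = γ₀ ^ p := by
    rw [← pow_succ, Nat.sub_add_cancel (by omega : 1 ≤ p)]
  have hid : γ₀ ^ (p - 1) + (p : K) = ((p : K) / γ₀) * (f 0 + f 1) := by
    rw [hf]
    simp only [pow_zero, pow_one]
    field_simp
    linear_combination h01
  rw [hid, norm_mul, norm_div, hpnorm, hγ₀]
  calc ((p:ℝ))⁻¹ / (p:ℝ) ^ (-(1:ℝ)/((p:ℝ)-1)) * ‖f 0 + f 1‖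
      ≤ ((p:ℝ))⁻¹ / (p:ℝ) ^ (-(1:ℝ)/((p:ℝ)-1)) * C := by
        apply mul_le_mul_of_nonneg_left hSC
        positivity
    _ = ((p : ℝ) ^ 2)⁻¹ := by
        rw [hC, div_eq_mul_inv, ← Real.rpow_neg hppos.le, ← Real.rpow_neg_one (p:ℝ),
          ← Real.rpow_add hppos, ← Real.rpow_add hppos]
        rw [show (-1 + -(-(1:ℝ)/((p:ℝ)-1)) + (-(1:ℝ) - 1/((p:ℝ)-1))) = -2 by field_simp; ring]
        rw [show ((-2:ℝ)) = -(2:ℕ) by norm_num, Real.rpow_neg hppos.le, Real.rpow_natCast]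
end

section
/- (Equation (3.4).) With γ_0 and γ_j as in the context, for every integer j ≥ 0 one has |γ_j| = p^{−(p^{j+1}/(p−1) − (j+1))}. -/
open Finset

/-- Equation (3.4): `|γ_j| = p^{−(p^{j+1}/(p−1) − (j+1))}` for every `j ≥ 0`,
where `γ_j = Σ_{i=0}^j γ₀^{p^i}/p^i`. -/
theorem stmt_6 (p : ℕ) (hp : p.Prime)
    (K : Type*) [NormedField K] [CompleteSpace K] [CharZero K]
    (hna : ∀ x y : K, ‖x + y‖ ≤ max ‖x‖ ‖y‖)
    (hpnorm : ‖(p : K)‖ = ((p : ℝ))⁻¹)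
    (γ₀ : K) (hγ₀ : ‖γ₀‖ = (p : ℝ) ^ (-(1 : ℝ) / ((p : ℝ) - 1)))
    (hroot : HasSum (fun i : ℕ => γ₀ ^ p ^ i / (p : K) ^ i) 0)
    (γ : ℕ → K) (hγ : ∀ j, γ j = ∑ i ∈ Finset.range (j + 1), γ₀ ^ p ^ i / (p : K) ^ i)
    (j : ℕ) :
    ‖γ j‖ = (p : ℝ) ^ (-((p : ℝ) ^ (j + 1) / ((p : ℝ) - 1) - ((j : ℝ) + 1))) := by
  have hp1 : (1:ℝ) < (p:ℝ) := by exact_mod_cast hp.one_lt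
  have hp0 : (0:ℝ) < (p:ℝ) := lt_trans one_pos hp1
  have hpm1 : (0:ℝ) < (p:ℝ) - 1 := by linarith
  set f : ℕ → K := fun i => γ₀ ^ p ^ i / (p : K) ^ i with hfdef
  set g : ℕ → ℝ := fun i => (i:ℝ) - (p:ℝ)^i/((p:ℝ)-1) with hgdef
  -- norm of each term
  have hnorm : ∀ i, ‖f i‖ = (p:ℝ) ^ (g i) := by
    intro i
    have h1 : ‖γ₀ ^ p ^ i‖ = (p:ℝ) ^ ((-(1:ℝ)/((p:ℝ)-1)) * ((p^i : ℕ) : ℝ)) := by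
      rw [norm_pow, hγ₀, ← Real.rpow_natCast ((p:ℝ) ^ (-(1:ℝ)/((p:ℝ)-1))) (p^i),
        ← Real.rpow_mul hp0.le]
    have h2 : ‖(p:K) ^ i‖ = (p:ℝ) ^ (-(i:ℝ)) := by
      rw [norm_pow, hpnorm, ← Real.rpow_natCast ((p:ℝ)⁻¹) i, Real.inv_rpow hp0.le,
        ← Real.rpow_neg hp0.le]
    have hstep : ‖f i‖ = ‖γ₀ ^ p ^ i‖ / ‖(p:K) ^ i‖ := by
      simp only [hfdef, norm_div]
    rw [hstep, h1, h2, ← Real.rpow_sub hp0]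
    congr 1
    simp only [hgdef]
    push_cast
    ring
  -- monotonicity of exponents on the tail
  have hmono : ∀ n : ℕ, g (n + (j+2)) ≤ g (j+2) := by
    intro n
    have hber : 1 + (n:ℝ) * ((p:ℝ)-1) ≤ (p:ℝ)^n := by
      have h := one_add_mul_le_pow (by linarith : (-2:ℝ) ≤ (p:ℝ)-1) n
      have heq : (1:ℝ) + ((p:ℝ)-1) = (p:ℝ) := by ring
      rwa [heq] at h
    have hpa : (1:ℝ) ≤ (p:ℝ)^(j+2) := one_le_pow₀ hp1.le
    have h : (n:ℝ) * ((p:ℝ)-1) ≤ (p:ℝ)^(n+(j+2)) - (p:ℝ)^(j+2) := by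
      have hpow : (p:ℝ)^(n+(j+2)) = (p:ℝ)^(j+2) * (p:ℝ)^n := by
        rw [add_comm, pow_add]
      rw [hpow]
      nlinarith [hber, hpa, mul_le_mul_of_nonneg_left hber (le_trans zero_le_one hpa),
        mul_le_mul_of_nonneg_right hpa (mul_nonneg (Nat.cast_nonneg n) hpm1.le)]
    have h2 : (n:ℝ) ≤ ((p:ℝ)^(n+(j+2)) - (p:ℝ)^(j+2))/((p:ℝ)-1) := by
      rw [le_div_iff₀ hpm1]; exact h
    rw [sub_div] at h2
    simp only [hgdef]
    push_cast
    linarith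
  -- strict decrease from j+1 to j+2
  have hstrict : g (j+2) < g (j+1) := by
    have h1p : (1:ℝ) < (p:ℝ)^(j+1) := one_lt_pow₀ hp1 (Nat.succ_ne_zero j)
    have hpow : (p:ℝ)^(j+2) = (p:ℝ)^(j+1) * (p:ℝ) := pow_succ _ _
    have h : (1:ℝ) * ((p:ℝ)-1) < (p:ℝ)^(j+2) - (p:ℝ)^(j+1) := by nlinarith
    have h2 : (1:ℝ) < ((p:ℝ)^(j+2) - (p:ℝ)^(j+1))/((p:ℝ)-1) := by
      rw [lt_div_iff₀ hpm1]; exact h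
    rw [sub_div] at h2
    simp only [hgdef]
    push_cast
    linarith
  -- general bound on sums from nonarchimedean property
  have key : ∀ (F : ℕ → K) (s : K) (c : ℝ), 0 ≤ c → HasSum F s →
      (∀ n, ‖F n‖ ≤ c) → ‖s‖ ≤ c := by
    intro F s c hc hs hF
    have hfin : ∀ t : Finset ℕ, ‖∑ i ∈ t, F i‖ ≤ c := by
      intro t
      induction t using Finset.induction_on with
      | empty => simpa using hc
      | @insert a s h ih =>
        rw [Finset.sum_insert h]
        exact le_trans (hna _ _) (max_le (hF _) ih)
    exact le_of_tendsto' ((continuous_norm.tendsto s).comp hs) hfin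
  -- γ j equals minus the tail of the series
  have htail : HasSum (fun n => f (n + (j+1))) (-(γ j)) := by
    rw [hasSum_nat_add_iff (j+1), ← hγ j, neg_add_cancel]
    exact hroot
  have hrest : HasSum (fun n => f (n + 1 + (j+1))) (-(γ j) - f (j+1)) := by
    have h5 := (hasSum_nat_add_iff' (f := fun n => f (n + (j+1))) (g := -(γ j)) 1).mpr htail
    simpa using h5
  -- the rest is strictly smaller than the leading term
  have hb : ‖-(γ j) - f (j+1)‖ ≤ (p:ℝ)^(g (j+2)) := by
    refine key _ _ _ (Real.rpow_nonneg hp0.le _) hrest ?_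
    intro n
    rw [hnorm]
    have : n + 1 + (j+1) = n + (j+2) := by ring
    rw [this]
    exact Real.rpow_le_rpow_left_iff hp1 |>.2 (hmono n)
  have hlt : ‖-(γ j) - f (j+1)‖ < ‖f (j+1)‖ := by
    rw [hnorm]
    exact lt_of_le_of_lt hb ((Real.rpow_lt_rpow_left_iff hp1).2 hstrict)
  -- nonarchimedean dominance
  have hdom : ‖f (j+1) + (-(γ j) - f (j+1))‖ = ‖f (j+1)‖ := by
    apply le_antisymm
    · exact le_trans (hna _ _) (max_le le_rfl hlt.le)
    · by_contra hcon
      push_neg at hcon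
      have h3 : ‖f (j+1)‖ ≤ max ‖f (j+1) + (-(γ j) - f (j+1))‖ ‖-(-(γ j) - f (j+1))‖ := by
        have h4 := hna (f (j+1) + (-(γ j) - f (j+1))) (-(-(γ j) - f (j+1)))
        simpa using h4
      rw [norm_neg] at h3
      have : max ‖f (j+1) + (-(γ j) - f (j+1))‖ ‖-(γ j) - f (j+1)‖ < ‖f (j+1)‖ :=
        max_lt hcon hlt
      linarith
  have hfinal : ‖γ j‖ = (p:ℝ)^(g (j+1)) := by
    rw [← norm_neg, show -(γ j) = f (j+1) + (-(γ j) - f (j+1)) by ring, hdom, hnorm]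
  rw [hfinal]
  congr 1
  simp only [hgdef]
  push_cast
  ring
end

section
/- (Equation (3.5).) With γ_0 and γ_j as in the context, for all integers j ≥ 0 and k ≥ 0 one has |γ_j^k / k!| = p^{−E(j,k)}, where E(j,k) = k·(p^j + p^{j−1} + ⋯ + p − j) + s_k/(p−1) (the sum p^j + ⋯ + p equals (p^{j+1} − p)/(p−1), and is 0 when j = 0). -/
open Finset

section Aux
variable {K : Type*} [NormedField K] (hna : ∀ x y : K, ‖x + y‖ ≤ max ‖x‖ ‖y‖)
include hna

lemma aux_nat_le (n : ℕ) : ‖(n : K)‖ ≤ 1 := by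
  induction n with
  | zero => simp
  | succ n ih =>
    push_cast
    exact le_trans (hna _ _) (max_le ih (by simp))

lemma aux_int_le (z : ℤ) : ‖(z : K)‖ ≤ 1 := by
  have h0 : ‖((z.natAbs : ℕ) : K)‖ ≤ 1 := aux_nat_le hna _
  rcases z.natAbs_eq with h | h
  · rw [h, Int.cast_natCast]; exact h0
  · rw [h, Int.cast_neg, Int.cast_natCast, norm_neg]; exact h0

lemma aux_coprime {p : ℕ} (hp : p.Prime) (hpnorm : ‖(p : K)‖ = ((p : ℝ))⁻¹)
    {m : ℕ} (hm : ¬ p ∣ m) : ‖(m : K)‖ = 1 := by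
  have hgcd : Nat.gcd p m = 1 := (Nat.Prime.coprime_iff_not_dvd hp).2 hm
  have hb := Nat.gcd_eq_gcd_ab p m
  rw [hgcd] at hb
  have hbK : (1 : K) = (p : K) * (Nat.gcdA p m : K) + (m : K) * (Nat.gcdB p m : K) := by
    exact_mod_cast congrArg (fun z : ℤ => (z : K)) hb
  have h1 : (1 : ℝ) ≤ max (‖(p : K)‖ * ‖(Nat.gcdA p m : K)‖) (‖(m : K)‖ * ‖(Nat.gcdB p m : K)‖) := by
    calc (1:ℝ) = ‖(1 : K)‖ := by simp
    _ = ‖(p : K) * (Nat.gcdA p m : K) + (m : K) * (Nat.gcdB p m : K)‖ := by rw [← hbK]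
    _ ≤ max ‖(p : K) * (Nat.gcdA p m : K)‖ ‖(m : K) * (Nat.gcdB p m : K)‖ := hna _ _
    _ = _ := by rw [norm_mul, norm_mul]
  have hplt : ‖(p : K)‖ * ‖(Nat.gcdA p m : K)‖ < 1 := by
    have : ((p:ℝ))⁻¹ < 1 := by
      rw [inv_lt_one_iff₀]; right; exact_mod_cast hp.one_lt
    calc ‖(p : K)‖ * ‖(Nat.gcdA p m : K)‖ ≤ ((p:ℝ))⁻¹ * 1 := by
          rw [hpnorm]; exact mul_le_mul_of_nonneg_left (aux_int_le hna _) (by positivity)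
      _ < 1 := by simpa using this
  have h2 : (1:ℝ) ≤ ‖(m : K)‖ * ‖(Nat.gcdB p m : K)‖ := by
    rcases max_cases (‖(p : K)‖ * ‖(Nat.gcdA p m : K)‖) (‖(m : K)‖ * ‖(Nat.gcdB p m : K)‖) with
      ⟨he, _⟩ | ⟨he, _⟩
    · rw [he] at h1; linarith
    · rwa [he] at h1
  have h3 : (1:ℝ) ≤ ‖(m : K)‖ := by
    calc (1:ℝ) ≤ ‖(m : K)‖ * ‖(Nat.gcdB p m : K)‖ := h2
      _ ≤ ‖(m : K)‖ * 1 := mul_le_mul_of_nonneg_left (aux_int_le hna _) (norm_nonneg _)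
      _ = ‖(m : K)‖ := mul_one _
  exact le_antisymm (aux_nat_le hna m) h3

lemma aux_norm_nat {p : ℕ} (hp : p.Prime) (hpnorm : ‖(p : K)‖ = ((p : ℝ))⁻¹)
    {n : ℕ} (hn : n ≠ 0) :
    ‖(n : K)‖ = (p : ℝ) ^ (-(padicValNat p n : ℝ)) := by
  have hfact : Fact p.Prime := ⟨hp⟩
  have hdecomp := Nat.ordProj_mul_ordCompl_eq_self n p
  have hndvd : ¬ p ∣ n / p ^ (n.factorization p) := Nat.not_dvd_ordCompl hp hn
  have hval : n.factorization p = padicValNat p n := Nat.factorization_def n hp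
  have hppos : (0:ℝ) < p := by exact_mod_cast hp.pos
  calc ‖(n : K)‖ = ‖((p ^ (n.factorization p) * (n / p ^ (n.factorization p)) : ℕ) : K)‖ := by
        rw [hdecomp]
    _ = ‖(p : K)‖ ^ (n.factorization p) * ‖((n / p ^ (n.factorization p) : ℕ) : K)‖ := by
        push_cast; rw [norm_mul, norm_pow]
    _ = ((p:ℝ))⁻¹ ^ (n.factorization p) := by
        rw [aux_coprime hna hp hpnorm hndvd, hpnorm, mul_one]
    _ = (p : ℝ) ^ (-(padicValNat p n : ℝ)) := by
        rw [← hval, ← Real.rpow_natCast ((p:ℝ))⁻¹, Real.inv_rpow (le_of_lt hppos),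
          ← Real.rpow_neg (le_of_lt hppos)]

end Aux

section Aux2
variable {K : Type*} [NormedField K] (hna : ∀ x y : K, ‖x + y‖ ≤ max ‖x‖ ‖y‖)
include hna

lemma aux_finset_sum_le {ι : Type*} (f : ι → K) {c : ℝ} (hc : 0 ≤ c)
    (h : ∀ i, ‖f i‖ ≤ c) (t : Finset ι) : ‖∑ i ∈ t, f i‖ ≤ c := by
  classical
  induction t using Finset.cons_induction with
  | empty => simpa using hc
  | cons a t ha ih =>
    rw [Finset.sum_cons]
    exact le_trans (hna _ _) (max_le (h a) ih)

lemma aux_tsum_le [CompleteSpace K] (f : ℕ → K) {c : ℝ} (hc : 0 ≤ c)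
    (h : ∀ i, ‖f i‖ ≤ c) : ‖∑' i, f i‖ ≤ c := by
  by_cases hf : Summable f
  · have := hf.hasSum
    have htend : Filter.Tendsto (fun t : Finset ℕ => ‖∑ i ∈ t, f i‖) Filter.atTop
        (nhds ‖∑' i, f i‖) := (continuous_norm.continuousAt).tendsto.comp this
    exact le_of_tendsto htend (Filter.Eventually.of_forall fun t => aux_finset_sum_le hna f hc h t)
  · rw [tsum_eq_zero_of_not_summable hf]; simpa using hc

lemma aux_dominant {x y : K} (h : ‖x‖ < ‖y‖) : ‖y + x‖ = ‖y‖ := by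
  refine le_antisymm (le_trans (hna _ _) (max_le le_rfl h.le)) ?_
  have h2 : ‖y‖ ≤ max ‖y + x‖ ‖x‖ := by
    have := hna (y + x) (-x)
    simpa using this
  rcases max_cases ‖y + x‖ ‖x‖ with ⟨he, _⟩ | ⟨he, hle⟩
  · rwa [he] at h2
  · rw [he] at h2; linarith

end Aux2

lemma aux_term_norm {K : Type*} [NormedField K] {p : ℕ} (hp : p.Prime)
    (hpnorm : ‖(p : K)‖ = ((p : ℝ))⁻¹) {γ₀ : K}
    (hγ₀ : ‖γ₀‖ = (p : ℝ) ^ (-(1 : ℝ) / ((p : ℝ) - 1))) (i : ℕ) :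
    ‖γ₀ ^ p ^ i / (p : K) ^ i‖ = (p : ℝ) ^ ((i:ℝ) - (p:ℝ)^i/((p:ℝ)-1)) := by
  have hppos : (0:ℝ) < p := by exact_mod_cast hp.pos
  rw [norm_div, norm_pow, norm_pow, hγ₀, hpnorm,
    ← Real.rpow_natCast ((p:ℝ) ^ (-(1:ℝ)/((p:ℝ)-1))) (p^i), ← Real.rpow_mul hppos.le,
    ← Real.rpow_natCast ((p:ℝ))⁻¹ i, Real.inv_rpow hppos.le, ← Real.rpow_neg hppos.le,
    ← Real.rpow_sub hppos]
  congr 1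
  push_cast
  ring

lemma aux_e_le {p : ℕ} (hp : p.Prime) {m k : ℕ} (hm : 1 ≤ m) (hmk : m ≤ k) :
    (k:ℝ) - (p:ℝ)^k/((p:ℝ)-1) ≤ (m:ℝ) - (p:ℝ)^m/((p:ℝ)-1) := by
  have hp2 : (2:ℝ) ≤ p := by exact_mod_cast hp.two_le
  have h2 : (0:ℝ) < (p:ℝ) - 1 := by linarith
  obtain ⟨n, rfl⟩ := Nat.exists_eq_add_of_le hmk
  have hber : 1 + (n:ℝ) * ((p:ℝ)-1) ≤ (p:ℝ)^n := by
    have := one_add_mul_le_pow (a := (p:ℝ)-1) (by linarith) n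
    simpa using this
  have hpm : (p:ℝ) ≤ (p:ℝ)^m := le_self_pow₀ (by linarith) (by omega)
  have hpnpos : (0:ℝ) < (p:ℝ)^n := by positivity
  have goal' : (n:ℝ) * ((p:ℝ)-1) ≤ (p:ℝ)^(m+n) - (p:ℝ)^m := by
    rw [pow_add]
    nlinarith [mul_nonneg (sub_nonneg.2 hpm) (by nlinarith : (0:ℝ) ≤ (p:ℝ)^n - 1),
      mul_nonneg (by linarith : (0:ℝ) ≤ (p:ℝ) - 2) (by nlinarith : (0:ℝ) ≤ (n:ℝ)*((p:ℝ)-1))]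
  have h3 : (n:ℝ) ≤ ((p:ℝ)^(m+n) - (p:ℝ)^m)/((p:ℝ)-1) := (le_div_iff₀ h2).2 goal'
  rw [sub_div] at h3
  push_cast
  linarith

lemma aux_e_lt {p : ℕ} (hp : p.Prime) {m k : ℕ} (hm : 1 ≤ m) (hmk : m < k) :
    (k:ℝ) - (p:ℝ)^k/((p:ℝ)-1) < (m:ℝ) - (p:ℝ)^m/((p:ℝ)-1) := by
  have hp2 : (2:ℝ) ≤ p := by exact_mod_cast hp.two_le
  have h2 : (0:ℝ) < (p:ℝ) - 1 := by linarith
  obtain ⟨n, hn1, rfl⟩ : ∃ n, 1 ≤ n ∧ k = m + n := ⟨k - m, by omega, by omega⟩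
  have hn1' : (1:ℝ) ≤ n := by exact_mod_cast hn1
  have hber : 1 + (n:ℝ) * ((p:ℝ)-1) ≤ (p:ℝ)^n := by
    have := one_add_mul_le_pow (a := (p:ℝ)-1) (by linarith) n
    simpa using this
  have hpm : (p:ℝ) ≤ (p:ℝ)^m := le_self_pow₀ (by linarith) (by omega)
  have hpnpos : (0:ℝ) < (p:ℝ)^n := by positivity
  have goal' : (n:ℝ) * ((p:ℝ)-1) < (p:ℝ)^(m+n) - (p:ℝ)^m := by
    rw [pow_add]
    nlinarith [mul_nonneg (sub_nonneg.2 hpm) (by nlinarith : (0:ℝ) ≤ (p:ℝ)^n - 1),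
      mul_nonneg (by linarith : (0:ℝ) ≤ (p:ℝ) - 2) (by nlinarith : (0:ℝ) ≤ (n:ℝ)*((p:ℝ)-1))]
  have h3 : (n:ℝ) < ((p:ℝ)^(m+n) - (p:ℝ)^m)/((p:ℝ)-1) := (lt_div_iff₀ h2).2 goal'
  rw [sub_div] at h3
  push_cast
  linarith

/-- Equation (3.5): `|γ_j^k/k!| = p^{−E(j,k)}` with
`E(j,k) = k·((p^{j+1} − p)/(p−1) − j) + s_k/(p−1)`, where
`(p^{j+1} − p)/(p−1) = p^j + p^{j-1} + ⋯ + p` (equal to `0` when `j = 0`) and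
`s_k` is the sum of the base-`p` digits of `k`. -/
theorem stmt_7 (p : ℕ) (hp : p.Prime)
    (K : Type*) [NormedField K] [CompleteSpace K] [CharZero K]
    (hna : ∀ x y : K, ‖x + y‖ ≤ max ‖x‖ ‖y‖)
    (hpnorm : ‖(p : K)‖ = ((p : ℝ))⁻¹)
    (γ₀ : K) (hγ₀ : ‖γ₀‖ = (p : ℝ) ^ (-(1 : ℝ) / ((p : ℝ) - 1)))
    (hroot : HasSum (fun i : ℕ => γ₀ ^ p ^ i / (p : K) ^ i) 0)
    (γ : ℕ → K) (hγ : ∀ j, γ j = ∑ i ∈ Finset.range (j + 1), γ₀ ^ p ^ i / (p : K) ^ i)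
    (s : ℕ → ℕ) (hs : ∀ k, s k = (Nat.digits p k).sum)
    (j k : ℕ) :
    ‖γ j ^ k / (k.factorial : K)‖ =
      (p : ℝ) ^ (-((k : ℝ) * (((p : ℝ) ^ (j + 1) - p) / ((p : ℝ) - 1) - (j : ℝ))
        + (s k : ℝ) / ((p : ℝ) - 1))) := by
  have hfact : Fact p.Prime := ⟨hp⟩
  have hppos : (0:ℝ) < p := by exact_mod_cast hp.pos
  have hp1 : (1:ℝ) < p := by exact_mod_cast hp.one_lt
  have hne : (p:ℝ) - 1 ≠ 0 := by linarith
  set a : ℕ → K := fun i => γ₀ ^ p ^ i / (p : K) ^ i with ha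
  set e : ℕ → ℝ := fun i => (i:ℝ) - (p:ℝ)^i/((p:ℝ)-1) with he
  have hterm : ∀ i, ‖a i‖ = (p:ℝ) ^ (e i) := fun i => aux_term_norm hp hpnorm hγ₀ i
  have hsum : Summable a := hroot.summable
  -- γ j equals minus the tail of the series
  have h1 : γ j + ∑' i, a (i + (j+1)) = 0 := by
    rw [hγ j, Summable.sum_add_tsum_nat_add (j+1) hsum, hroot.tsum_eq]
  have hγj : γ j = -∑' i, a (i + (j+1)) := eq_neg_of_add_eq_zero_left h1
  have hg : Summable (fun i => a (i + (j+1))) := (summable_nat_add_iff (j+1)).2 hsum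
  have h2 : (∑' i, a (i + (j+1))) = a (j+1) + ∑' i, a (i + (j+2)) := by
    have h3 := Summable.sum_add_tsum_nat_add (f := fun i => a (i + (j+1))) 1 hg
    rw [Finset.sum_range_one, zero_add] at h3
    rw [← h3]
    congr 1
    exact (tsum_congr fun i => by congr 1; omega).symm
  -- the tail after the dominant term is strictly smaller
  have hRle : ‖∑' i, a (i + (j+2))‖ ≤ (p:ℝ) ^ (e (j+2)) := by
    apply aux_tsum_le hna _ (Real.rpow_nonneg hppos.le _)
    intro i
    rw [hterm]
    exact (Real.rpow_le_rpow_left_iff hp1).2 (aux_e_le hp (by omega) (by omega))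
  have hdomlt : ‖∑' i, a (i + (j+2))‖ < ‖a (j+1)‖ := by
    rw [hterm]
    exact lt_of_le_of_lt hRle ((Real.rpow_lt_rpow_left_iff hp1).2 (aux_e_lt hp (by omega) (by omega)))
  have hγnorm : ‖γ j‖ = (p:ℝ) ^ (e (j+1)) := by
    rw [hγj, norm_neg, h2, aux_dominant hna hdomlt, hterm]
  -- norm of the factorial via Legendre's formula
  have hkfac : ‖((k.factorial : ℕ) : K)‖ = (p:ℝ) ^ (-(padicValNat p k.factorial : ℝ)) :=
    aux_norm_nat hna hp hpnorm k.factorial_ne_zero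
  have hsle : (Nat.digits p k).sum ≤ k := Nat.digit_sum_le p k
  have hlegR : ((p:ℝ) - 1) * (padicValNat p k.factorial : ℝ) = (k:ℝ) - ((s k : ℕ) : ℝ) := by
    have h := sub_one_mul_padicValNat_factorial (p := p) k
    rw [hs]
    have h2 := congrArg (Nat.cast : ℕ → ℝ) h
    rw [Nat.cast_mul, Nat.cast_sub hp.one_le, Nat.cast_sub hsle] at h2
    simpa using h2
  have hv : (padicValNat p k.factorial : ℝ) = ((k:ℝ) - (s k:ℝ))/((p:ℝ)-1) := by
    rw [eq_div_iff hne, mul_comm]; exact hlegR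
  rw [norm_div, norm_pow, hγnorm, hkfac,
    ← Real.rpow_natCast ((p:ℝ) ^ (e (j+1))) k, ← Real.rpow_mul hppos.le,
    ← Real.rpow_sub hppos]
  congr 1
  rw [hv, he]
  simp only
  push_cast
  field_simp
  ring
end

section
/- (Estimate (3.7).) With γ_0 and γ_j as in the context, for all integers j ≥ 1 and k ≥ 0, writing i = p^j·k, one has |γ_j^k / k!| ≤ p^{−(i(p−1)/p + s_i/(p−1))}. -/
open Finset

private lemma bern37 (r : ℝ) (hr : 2 ≤ r) (n : ℕ) : 1 + (n : ℝ) * (r - 1) ≤ r ^ n := by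
  have h := one_add_mul_le_pow (a := r - 1) (by linarith) n
  have : (1 + (r - 1)) = r := by ring
  rwa [this] at h

private lemma powgap37 (r : ℝ) (hr : 2 ≤ r) {n m : ℕ} (h : n ≤ m) :
    ((m : ℝ) - n) * (r - 1) ≤ r ^ m - r ^ n := by
  have h1 : (1 : ℝ) ≤ r ^ n := one_le_pow₀ (by linarith)
  have h2 := bern37 r hr (m - n)
  have hc : ((m - n : ℕ) : ℝ) = (m : ℝ) - n := by
    push_cast [h]; ring
  rw [hc] at h2
  have h3 : r ^ m = r ^ n * r ^ (m - n) := by rw [← pow_add]; congr 1; omega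
  have h4 : (0 : ℝ) ≤ (m : ℝ) - n := by
    have : (n : ℝ) ≤ (m : ℝ) := Nat.cast_le.mpr h
    linarith
  rw [h3]
  nlinarith [mul_le_mul_of_nonneg_left h2 (by positivity : (0:ℝ) ≤ r ^ n),
    mul_nonneg (by linarith : (0:ℝ) ≤ r ^ n - 1)
      (mul_nonneg h4 (by linarith : (0:ℝ) ≤ r - 1))]

private lemma expo37 (r : ℝ) (hr : 2 ≤ r) (j : ℕ) (hj : 1 ≤ j) (k sk : ℝ)
    (hk : 0 ≤ k) (hsk : 0 ≤ sk) :
    ((j + 1 : ℝ) - r ^ (j + 1) / (r - 1)) * k + (k - sk) / (r - 1) ≤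
      -((r ^ j * k) * (r - 1) / r + sk / (r - 1)) := by
  have hr1 : (0 : ℝ) < r - 1 := by linarith
  have hr0 : (0 : ℝ) < r := by linarith
  have hB : r * (r - 1) * (j + 1) + r + r ^ j ≤ 2 * r ^ (j + 1) := by
    have hb := bern37 r hr (j - 1)
    have hc : ((j - 1 : ℕ) : ℝ) = (j : ℝ) - 1 := by push_cast [hj]; ring
    rw [hc] at hb
    have h3 : r ^ j = r * r ^ (j - 1) := by
      rw [← pow_succ']; congr 1; omega
    have h4 : r ^ (j + 1) = r * r ^ j := by rw [pow_succ']
    have hj1 : (1 : ℝ) ≤ (j : ℝ) := by exact_mod_cast hj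
    nlinarith [mul_le_mul_of_nonneg_left hb (le_of_lt hr0), sq_nonneg (r - 1),
      mul_nonneg (mul_nonneg hr0.le hr1.le) (mul_nonneg (by linarith : (0:ℝ) ≤ (j:ℝ) - 1) hr1.le)]
  rw [← sub_nonpos]
  have hEq : ((j + 1 : ℝ) - r ^ (j + 1) / (r - 1)) * k + (k - sk) / (r - 1) -
      (-((r ^ j * k) * (r - 1) / r + sk / (r - 1))) =
      (k * (r * (r - 1) * (j + 1) + r + r ^ j - 2 * r ^ (j + 1))) / ((r - 1) * r) := by
    field_simp
    ring
  rw [hEq]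
  apply div_nonpos_of_nonpos_of_nonneg
  · nlinarith
  · positivity

/-- Estimate (3.7): for `j ≥ 1` and `k ≥ 0`, writing `i = p^j·k`, one has
`|γ_j^k/k!| ≤ p^{−(i(p−1)/p + s_i/(p−1))}`. -/
theorem stmt_9 (p : ℕ) (hp : p.Prime)
    (K : Type*) [NormedField K] [CompleteSpace K] [CharZero K]
    (hna : ∀ x y : K, ‖x + y‖ ≤ max ‖x‖ ‖y‖)
    (hpnorm : ‖(p : K)‖ = ((p : ℝ))⁻¹)
    (γ₀ : K) (hγ₀ : ‖γ₀‖ = (p : ℝ) ^ (-(1 : ℝ) / ((p : ℝ) - 1)))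
    (hroot : HasSum (fun i : ℕ => γ₀ ^ p ^ i / (p : K) ^ i) 0)
    (γ : ℕ → K) (hγ : ∀ j, γ j = ∑ i ∈ Finset.range (j + 1), γ₀ ^ p ^ i / (p : K) ^ i)
    (s : ℕ → ℕ) (hs : ∀ k, s k = (Nat.digits p k).sum)
    (j k i : ℕ) (hj : 1 ≤ j) (hi : i = p ^ j * k) :
    ‖γ j ^ k / (k.factorial : K)‖ ≤
      (p : ℝ) ^ (-((i : ℝ) * ((p : ℝ) - 1) / (p : ℝ) + (s i : ℝ) / ((p : ℝ) - 1))) := by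
  haveI : Fact p.Prime := ⟨hp⟩
  have hp2 : 2 ≤ p := hp.two_le
  set r : ℝ := (p : ℝ) with hrdef
  have hr2 : (2 : ℝ) ≤ r := by rw [hrdef]; exact_mod_cast hp2
  have hr0 : (0 : ℝ) < r := by linarith
  have hr1 : (1 : ℝ) < r := by linarith
  have hrm1 : (0 : ℝ) < r - 1 := by linarith
  -- norms of naturals and integers are ≤ 1
  have natle : ∀ n : ℕ, ‖(n : K)‖ ≤ 1 := by
    intro n
    induction n with
    | zero => simp
    | succ n ih =>
      push_cast
      refine le_trans (hna _ _) ?_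
      simp [ih]
  have intle : ∀ z : ℤ, ‖(z : K)‖ ≤ 1 := by
    intro z
    obtain ⟨n, rfl | rfl⟩ := z.eq_nat_or_neg <;> simp [natle n]
  -- naturals coprime to p have norm 1
  have copnorm : ∀ m : ℕ, Nat.Coprime p m → ‖(m : K)‖ = 1 := by
    intro m hm
    refine le_antisymm (natle m) ?_
    have hcop : IsCoprime (m : ℤ) (p : ℤ) := by
      rw [Int.isCoprime_iff_gcd_eq_one]
      exact_mod_cast hm.symm
    obtain ⟨u, v, huv⟩ := hcop
    have h1 : (1 : K) = (u : K) * (m : K) + (v : K) * (p : K) := by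
      have h := congrArg (fun z : ℤ => (z : K)) huv
      push_cast at h
      exact h.symm
    have h2 : (1 : ℝ) ≤ max ‖(m : K)‖ r⁻¹ := by
      calc (1 : ℝ) = ‖(1 : K)‖ := norm_one.symm
        _ = ‖(u : K) * (m : K) + (v : K) * (p : K)‖ := by rw [← h1]
        _ ≤ max ‖(u : K) * (m : K)‖ ‖(v : K) * (p : K)‖ := hna _ _
        _ ≤ max ‖(m : K)‖ r⁻¹ := by
            apply max_le_max
            · rw [norm_mul]
              exact mul_le_of_le_one_left (norm_nonneg _) (intle u)
            · rw [norm_mul, hpnorm]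
              exact mul_le_of_le_one_left (by positivity) (intle v)
    have hrinv : r⁻¹ < 1 := by
      rw [inv_lt_one_iff₀]
      right; exact hr1
    rcases le_max_iff.mp h2 with h | h
    · exact h
    · linarith
  -- norm of factorial
  set v : ℕ := padicValNat p (Nat.factorial k) with hvdef
  have hfacnorm : ‖((Nat.factorial k : ℕ) : K)‖ = (r ^ v)⁻¹ := by
    have hF : p ^ ((Nat.factorial k).factorization p) * (ordCompl[p] (Nat.factorial k))
        = Nat.factorial k := Nat.ordProj_mul_ordCompl_eq_self (Nat.factorial k) p
    have hvf : (Nat.factorial k).factorization p = v := Nat.factorization_def _ hp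
    have hc : Nat.Coprime p (ordCompl[p] (Nat.factorial k)) :=
      Nat.coprime_ordCompl hp (Nat.factorial_ne_zero k)
    calc ‖((Nat.factorial k : ℕ) : K)‖
        = ‖((p ^ ((Nat.factorial k).factorization p) * (ordCompl[p] (Nat.factorial k)) : ℕ) : K)‖ := by
          rw [hF]
      _ = ‖(p : K)‖ ^ ((Nat.factorial k).factorization p) *
            ‖((ordCompl[p] (Nat.factorial k) : ℕ) : K)‖ := by
          push_cast
          rw [norm_mul, norm_pow]
      _ = (r ^ v)⁻¹ := by rw [hpnorm, copnorm _ hc, mul_one, inv_pow, hvf]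
  -- Legendre / digit sum facts
  have hsk_le : s k ≤ k := by rw [hs]; exact Nat.digit_sum_le p k
  have hleg : (p - 1) * v = k - s k := by
    rw [hs]
    exact sub_one_mul_padicValNat_factorial k
  have hvr : (v : ℝ) = ((k : ℝ) - (s k : ℝ)) / (r - 1) := by
    have hcast : (r - 1) * (v : ℝ) = (k : ℝ) - (s k : ℝ) := by
      have := congrArg (fun n : ℕ => (n : ℝ)) hleg
      push_cast [Nat.cast_sub hsk_le, Nat.cast_sub (le_of_lt hp.one_lt)] at this
      convert this using 2 <;> push_cast <;> ring
    field_simp at hcast ⊢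
    linarith
  -- digit sum of i equals digit sum of k
  have hshift : ∀ m : ℕ, (Nat.digits p (p * m)).sum = (Nat.digits p m).sum := by
    intro m
    rcases Nat.eq_zero_or_pos m with rfl | hm
    · simp
    · rw [Nat.digits_def' hp.one_lt (by positivity), Nat.mul_mod_right,
        Nat.mul_div_cancel_left _ (by omega : 0 < p)]
      simp
  have hshiftpow : ∀ t m : ℕ, (Nat.digits p (p ^ t * m)).sum = (Nat.digits p m).sum := by
    intro t
    induction t with
    | zero => intro m; simp
    | succ t ih =>
      intro m
      have : p ^ (t + 1) * m = p ^ t * (p * m) := by ring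
      rw [this, ih (p * m), hshift m]
  have hsi : s i = s k := by rw [hs, hs, hi, hshiftpow j k]
  -- norm of each series term
  set f : ℕ → K := fun n => γ₀ ^ p ^ n / (p : K) ^ n with hf
  have hterm : ∀ M : ℕ, ‖f M‖ = r ^ ((M : ℝ) - (p ^ M : ℕ) / (r - 1)) := by
    intro M
    have : ‖f M‖ = (r ^ (-(1 : ℝ) / (r - 1))) ^ (p ^ M) / (r⁻¹) ^ M := by
      rw [hf]
      simp only [norm_div, norm_pow, hγ₀, hpnorm]
    rw [this, ← Real.rpow_natCast (r ^ (-(1 : ℝ) / (r - 1))) (p ^ M),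
      ← Real.rpow_mul hr0.le, inv_pow, div_eq_mul_inv, inv_inv, ← Real.rpow_natCast r M,
      ← Real.rpow_add hr0]
    congr 1
    push_cast
    ring
  -- ultrametric bound for the tail
  haveI : IsUltrametricDist K :=
    IsUltrametricDist.isUltrametricDist_of_forall_norm_add_le_max_norm hna
  have hsumm := hroot.summable
  have htail : γ j = -∑' m, f (m + (j + 1)) := by
    have h0 := Summable.sum_add_tsum_nat_add (f := f) (j + 1) hsumm
    rw [hroot.tsum_eq] at h0
    rw [hγ j]
    exact eq_neg_of_add_eq_zero_left h0
  have hγnorm : ‖γ j‖ ≤ r ^ ((j + 1 : ℝ) - (p ^ (j + 1) : ℕ) / (r - 1)) := by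
    rw [htail, norm_neg]
    apply IsUltrametricDist.norm_tsum_le_of_forall_le_of_nonneg
      (Real.rpow_nonneg hr0.le _)
    intro m
    rw [hterm]
    apply (Real.rpow_le_rpow_left_iff hr1).mpr
    have hgap := powgap37 r hr2 (n := j + 1) (m := m + (j + 1)) (by omega)
    have h5 : ((m + (j + 1) : ℕ) : ℝ) - ((j + 1 : ℕ) : ℝ) ≤
        (r ^ (m + (j + 1)) - r ^ (j + 1)) / (r - 1) := by
      rw [le_div_iff₀ hrm1]
      push_cast
      push_cast at hgap
      linarith
    rw [sub_div] at h5
    push_cast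
    push_cast at h5
    linarith
  -- assemble
  have hvnn : (0 : ℝ) ≤ (v : ℝ) := Nat.cast_nonneg v
  have hmain : ‖γ j ^ k / (Nat.factorial k : K)‖ ≤
      r ^ (((j + 1 : ℝ) - (p ^ (j + 1) : ℕ) / (r - 1)) * k + (v : ℝ)) := by
    rw [norm_div, norm_pow]
    have hfn : ‖(Nat.factorial k : K)‖ = (r ^ v)⁻¹ := hfacnorm
    rw [hfn, div_eq_mul_inv, inv_inv]
    calc ‖γ j‖ ^ k * r ^ v
        ≤ (r ^ ((j + 1 : ℝ) - (p ^ (j + 1) : ℕ) / (r - 1))) ^ k * r ^ v := by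
          apply mul_le_mul_of_nonneg_right _ (by positivity)
          exact pow_le_pow_left₀ (norm_nonneg _) hγnorm k
      _ = r ^ (((j + 1 : ℝ) - (p ^ (j + 1) : ℕ) / (r - 1)) * k + (v : ℝ)) := by
          rw [← Real.rpow_natCast (r ^ ((j + 1 : ℝ) - (p ^ (j + 1) : ℕ) / (r - 1))) k,
            ← Real.rpow_mul hr0.le, ← Real.rpow_natCast r v, ← Real.rpow_add hr0]
  refine hmain.trans ?_
  apply (Real.rpow_le_rpow_left_iff hr1).mpr
  have hir : (i : ℝ) = r ^ j * (k : ℝ) := by rw [hi]; push_cast; ring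
  rw [hir, hsi, hvr]
  have := expo37 r hr2 j hj (k : ℝ) (s k : ℝ) (Nat.cast_nonneg k) (Nat.cast_nonneg (s k))
  push_cast
  push_cast at this
  linarith
end

section
/- (Estimate (3.10): coefficients of θ̂₁.) With γ_0 and γ_j as in the context, for all integers J ≥ 1 and i ≥ 0, the i-th coefficient of the formal power series ∏_{j=1}^J exp(γ_j t^{p^j}) ∈ K[[t]], namely b_i = Σ ∏_{j=1}^J γ_j^{k_j}/k_j! where the sum is over all (k_1,…,k_J) ∈ ℕ^J with Σ_{j=1}^J p^j·k_j = i, satisfies |b_i| ≤ p^{−(i(p−1)/p + s_i/(p−1))}. (Equivalently: writing θ̂₁(t) = Σ_i θ̂_{1,i}(γ_0 t)^i/i!, one has ord_p θ̂_{1,i} ≥ i(p−1)/p.) -/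
open Finset

lemma myaux_digit_sum_mul_base {p : ℕ} (hp : 1 < p) (n : ℕ) :
    (Nat.digits p (p * n)).sum = (Nat.digits p n).sum := by
  rcases Nat.eq_zero_or_pos n with rfl | hn
  · simp
  · rw [Nat.digits_def' hp (by positivity)]
    simp [Nat.mul_div_cancel_left _ (by omega : 0 < p), Nat.mul_mod_right]

lemma myaux_digit_sum_pow_mul {p : ℕ} (hp : 1 < p) (m n : ℕ) :
    (Nat.digits p (p ^ m * n)).sum = (Nat.digits p n).sum := by
  induction m with
  | zero => simp
  | succ m ih => rw [pow_succ, mul_comm (p^m) p, mul_assoc, myaux_digit_sum_mul_base hp, ih]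

lemma myaux_digit_sum_add_le {p : ℕ} (hp : p.Prime) (a b : ℕ) :
    (Nat.digits p (a + b)).sum ≤ (Nat.digits p a).sum + (Nat.digits p b).sum := by
  haveI : Fact p.Prime := ⟨hp⟩
  have h1 := sub_one_mul_padicValNat_factorial (p := p) a
  have h2 := sub_one_mul_padicValNat_factorial (p := p) b
  have h3 := sub_one_mul_padicValNat_factorial (p := p) (a + b)
  have hdvd : a.factorial * b.factorial ∣ (a + b).factorial :=
    Nat.factorial_mul_factorial_dvd_factorial_add a b
  have hv : padicValNat p (a.factorial * b.factorial) ≤ padicValNat p (a + b).factorial := by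
    have := (Nat.factorization_le_iff_dvd (Nat.mul_ne_zero (Nat.factorial_ne_zero _)
      (Nat.factorial_ne_zero _)) (Nat.factorial_ne_zero _)).mpr hdvd p
    rwa [Nat.factorization_def _ hp, Nat.factorization_def _ hp] at this
  rw [padicValNat.mul (Nat.factorial_ne_zero _) (Nat.factorial_ne_zero _)] at hv
  have hva := Nat.digit_sum_le p a
  have hvb := Nat.digit_sum_le p b
  have hvab := Nat.digit_sum_le p (a + b)
  have := Nat.mul_le_mul_left (p - 1) hv
  rw [Nat.mul_add, h1, h2, h3] at this
  omega

lemma myaux_digit_sum_finsum_le {p : ℕ} (hp : p.Prime) {ι : Type*} (s : Finset ι) (f : ι → ℕ) :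
    (Nat.digits p (∑ j ∈ s, f j)).sum ≤ ∑ j ∈ s, (Nat.digits p (f j)).sum := by
  induction s using Finset.cons_induction with
  | empty => simp
  | cons a s ha ih =>
    rw [Finset.sum_cons, Finset.sum_cons]
    exact (myaux_digit_sum_add_le hp _ _).trans (by omega)

lemma myaux_pow_ineq (x : ℝ) (hx : 2 ≤ x) : ∀ m : ℕ, 1 ≤ m →
    ((m : ℝ) + 1) * x * (x - 1) + x ≤ x ^ m * (2 * x - 1) := by
  intro m hm
  induction m, hm using Nat.le_induction with
  | base => push_cast; nlinarith
  | succ m hm ih =>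
    have hxm : (1 : ℝ) ≤ x ^ m := one_le_pow₀ (by linarith : (1:ℝ) ≤ x)
    have hA : (0:ℝ) ≤ x - 1 := by linarith
    have key : ((m:ℝ)+1+1) ≤ ((m:ℝ)+1)*x := by nlinarith [(Nat.one_le_cast (α := ℝ)).mpr hm]
    push_cast
    calc ((m : ℝ) + 1 + 1) * x * (x - 1) + x
        ≤ x * (((m : ℝ) + 1) * x * (x - 1) + x) := by
          nlinarith [mul_le_mul_of_nonneg_right key (mul_nonneg (by linarith : (0:ℝ) ≤ x) hA)]
      _ ≤ x * (x ^ m * (2 * x - 1)) := by nlinarith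
      _ = x ^ (m + 1) * (2 * x - 1) := by ring

lemma myaux_norm_coprime {K : Type*} [NormedField K] [IsUltrametricDist K]
    {p : ℕ} (hp : p.Prime) (hpnorm : ‖(p : K)‖ = ((p : ℝ))⁻¹)
    {m : ℕ} (hm : Nat.Coprime p m) : ‖(m : K)‖ = 1 := by
  have hp1 : (1:ℝ) < p := by exact_mod_cast hp.one_lt
  have hb := Nat.gcd_eq_gcd_ab p m
  rw [Nat.Coprime] at hm
  rw [hm] at hb
  have hK : (1 : K) = (p : K) * ((Nat.gcdA p m : ℤ) : K) + (m : K) * ((Nat.gcdB p m : ℤ) : K) := by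
    exact_mod_cast congrArg (fun z : ℤ => (z : K)) hb
  have h1 : (1:ℝ) ≤ max ‖(p : K) * ((Nat.gcdA p m : ℤ) : K)‖ ‖(m : K) * ((Nat.gcdB p m : ℤ) : K)‖ := by
    calc (1:ℝ) = ‖(1:K)‖ := norm_one.symm
      _ ≤ _ := by rw [hK]; exact IsUltrametricDist.norm_add_le_max _ _
  have h2 : ‖(p : K) * ((Nat.gcdA p m : ℤ) : K)‖ < 1 := by
    rw [norm_mul, hpnorm]
    calc (p:ℝ)⁻¹ * ‖((Nat.gcdA p m : ℤ) : K)‖ ≤ (p:ℝ)⁻¹ * 1 :=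
          mul_le_mul_of_nonneg_left (IsUltrametricDist.norm_intCast_le_one K _) (by positivity)
      _ < 1 := by rw [mul_one]; exact inv_lt_one_of_one_lt₀ hp1
  have h3 : (1:ℝ) ≤ ‖(m : K)‖ := by
    rcases le_max_iff.mp h1 with h | h
    · linarith
    · calc (1:ℝ) ≤ ‖(m : K)‖ * ‖((Nat.gcdB p m : ℤ) : K)‖ := by rwa [← norm_mul]
        _ ≤ ‖(m : K)‖ * 1 :=
          mul_le_mul_of_nonneg_left (IsUltrametricDist.norm_intCast_le_one K _) (norm_nonneg _)
        _ = ‖(m : K)‖ := mul_one _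
  exact le_antisymm (IsUltrametricDist.norm_natCast_le_one K m) h3

lemma myaux_norm_nat {K : Type*} [NormedField K] [IsUltrametricDist K]
    {p : ℕ} (hp : p.Prime) (hpnorm : ‖(p : K)‖ = ((p : ℝ))⁻¹)
    {n : ℕ} (hn : n ≠ 0) : ‖(n : K)‖ = (p : ℝ) ^ (-(padicValNat p n : ℝ)) := by
  have hp0 : (0:ℝ) < p := by exact_mod_cast hp.pos
  have hfac := Nat.ordProj_mul_ordCompl_eq_self n p
  have hcast : (n : K) = ((p:K) ^ (n.factorization p)) * ((n / p ^ n.factorization p : ℕ) : K) := by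
    rw [← Nat.cast_pow, ← Nat.cast_mul, hfac]
  rw [hcast, norm_mul, norm_pow, hpnorm,
    myaux_norm_coprime hp hpnorm (Nat.coprime_ordCompl hp hn), mul_one,
    ← Nat.factorization_def n hp, Real.rpow_neg hp0.le, Real.rpow_natCast, ← inv_pow]

noncomputable def myE (p m : ℕ) : ℝ := (m : ℝ) + 1 - (p : ℝ) ^ (m + 1) / ((p : ℝ) - 1)

lemma myaux_gamma_bound {K : Type*} [NormedField K] [IsUltrametricDist K]
    {p : ℕ} (hp : p.Prime) (hpnorm : ‖(p : K)‖ = ((p : ℝ))⁻¹)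
    {γ₀ : K} (hγ₀ : ‖γ₀‖ = (p : ℝ) ^ (-(1 : ℝ) / ((p : ℝ) - 1)))
    (hroot : HasSum (fun i : ℕ => γ₀ ^ p ^ i / (p : K) ^ i) 0)
    (γ : ℕ → K) (hγ : ∀ j, γ j = ∑ i ∈ Finset.range (j + 1), γ₀ ^ p ^ i / (p : K) ^ i)
    (m : ℕ) : ‖γ m‖ ≤ (p : ℝ) ^ (myE p m) := by
  have hp2 : (2:ℝ) ≤ p := by exact_mod_cast hp.two_le
  have hp0 : (0:ℝ) < p := by linarith
  have hp1 : (1:ℝ) ≤ p := by linarith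
  have hpm1 : (0:ℝ) < (p:ℝ) - 1 := by linarith
  have hnorm : ∀ n : ℕ, ‖γ₀ ^ p ^ n / (p : K) ^ n‖
      = (p : ℝ) ^ ((n : ℝ) - ((p^n : ℕ) : ℝ) / ((p:ℝ) - 1)) := by
    intro n
    rw [norm_div, norm_pow, norm_pow, hγ₀, hpnorm,
      ← Real.rpow_natCast ((p:ℝ) ^ (-(1 : ℝ) / ((p : ℝ) - 1))) (p ^ n),
      ← Real.rpow_mul hp0.le, ← Real.rpow_neg_one (p:ℝ),
      ← Real.rpow_natCast ((p:ℝ) ^ (-1 : ℝ)) n, ← Real.rpow_mul hp0.le,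
      ← Real.rpow_sub hp0]
    congr 1
    field_simp
    ring
  have hg : ∀ n : ℕ, m + 1 ≤ n → ((n : ℝ) - ((p^n : ℕ) : ℝ) / ((p:ℝ) - 1)) ≤ myE p m := by
    intro n hn
    induction n, hn using Nat.le_induction with
    | base =>
      unfold myE
      push_cast
      ring_nf
      exact le_refl _
    | succ n hn ih =>
      have hpn : (1:ℝ) ≤ (p:ℝ) ^ n := one_le_pow₀ hp1
      have heq : ((n+1 : ℕ) : ℝ) - ((p^(n+1) : ℕ) : ℝ) / ((p:ℝ) - 1)
          = ((n : ℕ) : ℝ) - ((p^n : ℕ) : ℝ) / ((p:ℝ) - 1) + (1 - (p:ℝ)^n) := by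
        push_cast
        field_simp
        ring
      rw [heq]
      linarith
  have htail : HasSum (fun n : ℕ => γ₀ ^ p ^ (n + (m+1)) / (p : K) ^ (n + (m+1)))
      (0 - ∑ i ∈ Finset.range (m+1), γ₀ ^ p ^ i / (p : K) ^ i) :=
    (hasSum_nat_add_iff' (m+1)).mpr hroot
  have hγm : ‖γ m‖ = ‖∑' n : ℕ, γ₀ ^ p ^ (n + (m+1)) / (p : K) ^ (n + (m+1))‖ := by
    rw [htail.tsum_eq, zero_sub, norm_neg, hγ m]
  rw [hγm]
  apply IsUltrametricDist.norm_tsum_le_of_forall_le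
  intro n
  rw [hnorm]
  apply Real.rpow_le_rpow_of_exponent_le hp1
  exact hg _ (by omega)

lemma myaux_exponent (p : ℕ) (hp : p.Prime) (s : ℕ → ℕ) (hs : ∀ k, s k = (Nat.digits p k).sum)
    (J i : ℕ) (k : Fin J → ℕ) (hcond : ∑ j : Fin J, p ^ ((j : ℕ) + 1) * k j = i)
    (v : Fin J → ℝ) (hv : ∀ j, ((p:ℝ) - 1) * v j = (k j : ℝ) - (s (k j) : ℝ)) :
    ∑ j : Fin J, ((k j : ℝ) * myE p ((j : ℕ) + 1) + v j)
      ≤ -((i : ℝ) * ((p:ℝ) - 1) / (p:ℝ) + (s i : ℝ) / ((p:ℝ) - 1)) := by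
  have hp2R : (2:ℝ) ≤ p := by exact_mod_cast hp.two_le
  have hp0 : (0:ℝ) < p := by linarith
  have hpm1 : (0:ℝ) < (p:ℝ) - 1 := by linarith
  have hposmul : (0:ℝ) < (p:ℝ) * ((p:ℝ) - 1) := mul_pos hp0 hpm1
  rw [← mul_le_mul_iff_right₀ hposmul]
  have key1 : ∀ j : Fin J, (p:ℝ) * ((p:ℝ) - 1) * ((k j : ℝ) * myE p ((j : ℕ) + 1) + v j)
      ≤ -((k j : ℝ) * (p:ℝ) ^ ((j : ℕ) + 1) * ((p:ℝ) - 1) ^ 2) - (p:ℝ) * (s (k j) : ℝ) := by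
    intro j
    have hE : (p:ℝ) * ((p:ℝ) - 1) * myE p ((j : ℕ) + 1)
        = (((j : ℕ) : ℝ) + 2) * (p:ℝ) * ((p:ℝ) - 1) - (p:ℝ) ^ ((j : ℕ) + 3) := by
      unfold myE
      push_cast
      field_simp
      ring
    have hpow := myaux_pow_ineq (p:ℝ) hp2R ((j : ℕ) + 1) (by omega)
    push_cast at hpow
    have hkj0 : (0:ℝ) ≤ (k j : ℝ) := Nat.cast_nonneg _
    have h3 : (p:ℝ) ^ ((j : ℕ) + 1) * (2 * (p:ℝ) - 1) + (p:ℝ) ^ ((j : ℕ) + 1) * ((p:ℝ) - 1) ^ 2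
        = (p:ℝ) ^ ((j : ℕ) + 3) := by ring
    calc (p:ℝ) * ((p:ℝ) - 1) * ((k j : ℝ) * myE p ((j : ℕ) + 1) + v j)
        = (k j : ℝ) * ((p:ℝ) * ((p:ℝ) - 1) * myE p ((j : ℕ) + 1)) + (p:ℝ) * (((p:ℝ) - 1) * v j) := by
          ring
      _ = (k j : ℝ) * ((((j : ℕ) : ℝ) + 2) * (p:ℝ) * ((p:ℝ) - 1) - (p:ℝ) ^ ((j : ℕ) + 3))
            + (p:ℝ) * ((k j : ℝ) - (s (k j) : ℝ)) := by rw [hE, hv j]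
      _ ≤ -((k j : ℝ) * (p:ℝ) ^ ((j : ℕ) + 1) * ((p:ℝ) - 1) ^ 2) - (p:ℝ) * (s (k j) : ℝ) := by
          nlinarith [mul_le_mul_of_nonneg_left hpow hkj0]
  have key2 : (s i : ℝ) ≤ ∑ j : Fin J, (s (k j) : ℝ) := by
    have hnat : s i ≤ ∑ j : Fin J, s (k j) := by
      rw [hs, ← hcond]
      calc (Nat.digits p (∑ j : Fin J, p ^ ((j : ℕ) + 1) * k j)).sum
          ≤ ∑ j : Fin J, (Nat.digits p (p ^ ((j : ℕ) + 1) * k j)).sum :=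
            myaux_digit_sum_finsum_le hp _ _
        _ = ∑ j : Fin J, s (k j) := by
            refine Finset.sum_congr rfl fun j _ => ?_
            rw [myaux_digit_sum_pow_mul hp.one_lt, hs]
    exact_mod_cast Nat.cast_le.mpr hnat |>.trans_eq (Nat.cast_sum _ _)
  have hiR : ∑ j : Fin J, (p:ℝ) ^ ((j : ℕ) + 1) * (k j : ℝ) = (i : ℝ) := by
    exact_mod_cast congrArg (fun n : ℕ => (n : ℝ)) hcond
  calc (p:ℝ) * ((p:ℝ) - 1) * ∑ j : Fin J, ((k j : ℝ) * myE p ((j : ℕ) + 1) + v j)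
      = ∑ j : Fin J, (p:ℝ) * ((p:ℝ) - 1) * ((k j : ℝ) * myE p ((j : ℕ) + 1) + v j) :=
        Finset.mul_sum _ _ _
    _ ≤ ∑ j : Fin J, (-((k j : ℝ) * (p:ℝ) ^ ((j : ℕ) + 1) * ((p:ℝ) - 1) ^ 2)
          - (p:ℝ) * (s (k j) : ℝ)) := Finset.sum_le_sum fun j _ => key1 j
    _ = -(((p:ℝ) - 1) ^ 2 * ∑ j : Fin J, (p:ℝ) ^ ((j : ℕ) + 1) * (k j : ℝ))
          - (p:ℝ) * ∑ j : Fin J, (s (k j) : ℝ) := by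
        rw [Finset.sum_sub_distrib, Finset.mul_sum, Finset.mul_sum, ← Finset.sum_neg_distrib]
        congr 1
        exact Finset.sum_congr rfl fun j _ => by ring
    _ ≤ -(((p:ℝ) - 1) ^ 2 * (i : ℝ)) - (p:ℝ) * (s i : ℝ) := by
        rw [hiR]
        have := mul_le_mul_of_nonneg_left key2 hp0.le
        linarith
    _ = (p:ℝ) * ((p:ℝ) - 1) * -((i : ℝ) * ((p:ℝ) - 1) / (p:ℝ) + (s i : ℝ) / ((p:ℝ) - 1)) := by
        field_simp
        ring


/-- Estimate (3.10): the `i`-th coefficient `b_i` of `∏_{j=1}^J exp(γ_j t^{p^j})`,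
namely `b_i = Σ ∏_{j=1}^J γ_j^{k_j}/k_j!` over all `(k_1,…,k_J) ∈ ℕ^J` with
`Σ_j p^j k_j = i` (each such `k_j` satisfies `k_j ≤ i`, so the sum may be taken over
`k_j ∈ {0,…,i}`), satisfies `|b_i| ≤ p^{−(i(p−1)/p + s_i/(p−1))}`. -/
theorem stmt_10 (p : ℕ) (hp : p.Prime)
    (K : Type*) [NormedField K] [CompleteSpace K] [CharZero K]
    (hna : ∀ x y : K, ‖x + y‖ ≤ max ‖x‖ ‖y‖)
    (hpnorm : ‖(p : K)‖ = ((p : ℝ))⁻¹)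
    (γ₀ : K) (hγ₀ : ‖γ₀‖ = (p : ℝ) ^ (-(1 : ℝ) / ((p : ℝ) - 1)))
    (hroot : HasSum (fun i : ℕ => γ₀ ^ p ^ i / (p : K) ^ i) 0)
    (γ : ℕ → K) (hγ : ∀ j, γ j = ∑ i ∈ Finset.range (j + 1), γ₀ ^ p ^ i / (p : K) ^ i)
    (s : ℕ → ℕ) (hs : ∀ k, s k = (Nat.digits p k).sum)
    (J i : ℕ) (hJ : 1 ≤ J) (b : K)
    (hb : b = ∑ k : Fin J → Fin (i + 1),
      if ∑ j : Fin J, p ^ ((j : ℕ) + 1) * (k j : ℕ) = i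
      then ∏ j : Fin J, γ ((j : ℕ) + 1) ^ (k j : ℕ) / (((k j : ℕ).factorial : ℕ) : K)
      else 0) :
    ‖b‖ ≤ (p : ℝ) ^ (-((i : ℝ) * ((p : ℝ) - 1) / (p : ℝ) + (s i : ℝ) / ((p : ℝ) - 1))) := by
  haveI : Fact p.Prime := ⟨hp⟩
  haveI : IsUltrametricDist K :=
    IsUltrametricDist.isUltrametricDist_of_forall_norm_add_le_max_norm hna
  have hp2R : (2:ℝ) ≤ p := by exact_mod_cast hp.two_le
  have hp0 : (0:ℝ) < p := by linarith
  have hp1 : (1:ℝ) ≤ p := by linarith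
  have hpm1 : (0:ℝ) < (p:ℝ) - 1 := by linarith
  subst hb
  apply IsUltrametricDist.norm_sum_le_of_forall_le_of_nonneg (Real.rpow_nonneg hp0.le _)
  intro k _
  split_ifs with hcond
  swap
  · rw [norm_zero]; positivity
  have hleg : ∀ n : ℕ, ((p:ℝ) - 1) * (padicValNat p n.factorial : ℝ) = (n:ℝ) - (s n : ℝ) := by
    intro n
    have h := sub_one_mul_padicValNat_factorial (p := p) n
    have hsn : (Nat.digits p n).sum ≤ n := Nat.digit_sum_le p n
    have h2 := congrArg (fun t : ℕ => (t : ℝ)) h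
    rw [Nat.cast_mul, Nat.cast_sub hp.one_lt.le, Nat.cast_sub hsn, Nat.cast_one] at h2
    rw [h2, hs]
  have hterm : ∀ j : Fin J, ‖γ ((j:ℕ)+1) ^ (k j : ℕ) / (((k j : ℕ).factorial : ℕ) : K)‖
      ≤ (p:ℝ) ^ (((k j : ℕ):ℝ) * myE p ((j:ℕ)+1)
          + (padicValNat p ((k j : ℕ)).factorial : ℝ)) := by
    intro j
    rw [norm_div, norm_pow, myaux_norm_nat hp hpnorm (Nat.factorial_ne_zero _),
        Real.rpow_add hp0, Real.rpow_neg hp0.le, div_inv_eq_mul]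
    have h1 : ‖γ ((j:ℕ)+1)‖ ^ (k j : ℕ) ≤ ((p:ℝ) ^ (myE p ((j:ℕ)+1))) ^ (k j : ℕ) :=
      pow_le_pow_left₀ (norm_nonneg _) (myaux_gamma_bound hp hpnorm hγ₀ hroot γ hγ _) _
    have h2 : ((p:ℝ) ^ (myE p ((j:ℕ)+1))) ^ (k j : ℕ)
        = (p:ℝ) ^ (((k j : ℕ):ℝ) * myE p ((j:ℕ)+1)) := by
      rw [← Real.rpow_natCast ((p:ℝ) ^ (myE p ((j:ℕ)+1))) (k j : ℕ),
          ← Real.rpow_mul hp0.le, mul_comm]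
    rw [← h2]
    exact mul_le_mul_of_nonneg_right h1 (Real.rpow_nonneg hp0.le _)
  calc ‖∏ j : Fin J, γ ((j:ℕ)+1) ^ (k j : ℕ) / (((k j : ℕ).factorial : ℕ) : K)‖
      = ∏ j : Fin J, ‖γ ((j:ℕ)+1) ^ (k j : ℕ) / (((k j : ℕ).factorial : ℕ) : K)‖ :=
        norm_prod _ _
    _ ≤ ∏ j : Fin J, (p:ℝ) ^ (((k j : ℕ):ℝ) * myE p ((j:ℕ)+1)
          + (padicValNat p ((k j : ℕ)).factorial : ℝ)) :=
        Finset.prod_le_prod (fun j _ => norm_nonneg _) (fun j _ => hterm j)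
    _ = (p:ℝ) ^ (∑ j : Fin J, (((k j : ℕ):ℝ) * myE p ((j:ℕ)+1)
          + (padicValNat p ((k j : ℕ)).factorial : ℝ))) :=
        (Real.rpow_sum_of_pos hp0 _ _).symm
    _ ≤ (p:ℝ) ^ (-((i : ℝ) * ((p : ℝ) - 1) / (p : ℝ) + (s i : ℝ) / ((p : ℝ) - 1))) := by
        apply Real.rpow_le_rpow_of_exponent_le hp1
        exact myaux_exponent p hp s hs J i (fun j => (k j : ℕ)) hcond
          (fun j => (padicValNat p ((k j : ℕ)).factorial : ℝ)) (fun j => hleg _)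
end

section
/- (Estimate (3.8): p-integrality of the coefficients of θ̂.) With γ_0 and γ_j as in the context, for all integers J ≥ 0 and i ≥ 0, the i-th coefficient of the formal power series ∏_{j=0}^J exp(γ_j t^{p^j}) ∈ K[[t]], namely c_i = Σ ∏_{j=0}^J γ_j^{k_j}/k_j! where the sum is over all (k_0,…,k_J) ∈ ℕ^{J+1} with Σ_{j=0}^J p^j·k_j = i, satisfies |c_i| ≤ p^{−s_i/(p−1)}. (Equivalently: writing θ̂(t) = Σ_i θ̂_i (γ_0 t)^i/i!, one has ord_p θ̂_i ≥ 0.) -/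
open Finset

/-- Estimate (3.8): the `i`-th coefficient `c_i` of `∏_{j=0}^J exp(γ_j t^{p^j})`,
namely `c_i = Σ ∏_{j=0}^J γ_j^{k_j}/k_j!` over all `(k_0,…,k_J) ∈ ℕ^{J+1}` with
`Σ_j p^j k_j = i` (each such `k_j` satisfies `k_j ≤ i`, so the sum may be taken over
`k_j ∈ {0,…,i}`), satisfies `|c_i| ≤ p^{−s_i/(p−1)}`; equivalently, writing
`θ̂(t) = Σ_i θ̂_i (γ₀ t)^i/i!`, one has `ord_p θ̂_i ≥ 0`. -/
theorem stmt_11 (p : ℕ) (hp : p.Prime)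
    (K : Type*) [NormedField K] [CompleteSpace K] [CharZero K]
    (hna : ∀ x y : K, ‖x + y‖ ≤ max ‖x‖ ‖y‖)
    (hpnorm : ‖(p : K)‖ = ((p : ℝ))⁻¹)
    (γ₀ : K) (hγ₀ : ‖γ₀‖ = (p : ℝ) ^ (-(1 : ℝ) / ((p : ℝ) - 1)))
    (hroot : HasSum (fun i : ℕ => γ₀ ^ p ^ i / (p : K) ^ i) 0)
    (γ : ℕ → K) (hγ : ∀ j, γ j = ∑ i ∈ Finset.range (j + 1), γ₀ ^ p ^ i / (p : K) ^ i)
    (s : ℕ → ℕ) (hs : ∀ k, s k = (Nat.digits p k).sum)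
    (J i : ℕ) (c : K)
    (hc : c = ∑ k : Fin (J + 1) → Fin (i + 1),
      if ∑ j : Fin (J + 1), p ^ (j : ℕ) * (k j : ℕ) = i
      then ∏ j : Fin (J + 1), γ (j : ℕ) ^ (k j : ℕ) / (((k j : ℕ).factorial : ℕ) : K)
      else 0) :
    ‖c‖ ≤ (p : ℝ) ^ (-((s i : ℝ) / ((p : ℝ) - 1))) := by
  classical
  haveI : Fact p.Prime := ⟨hp⟩
  haveI : IsUltrametricDist K :=
    IsUltrametricDist.isUltrametricDist_of_forall_norm_add_le_max_norm hna
  have hp1 : (1:ℝ) < (p:ℝ) := by exact_mod_cast hp.one_lt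
  have hp0 : (0:ℝ) < (p:ℝ) := by linarith
  have hps : (0:ℝ) < (p:ℝ) - 1 := by linarith
  have hd0 : ((p:ℝ) - 1) ≠ 0 := ne_of_gt hps
  -- norm of a natural number coprime to p is 1
  have hcop : ∀ n : ℕ, ¬ p ∣ n → ‖(n : K)‖ = 1 := by
    intro n hn
    refine le_antisymm (IsUltrametricDist.norm_natCast_le_one K n) ?_
    by_contra hlt
    push_neg at hlt
    have hg : Nat.gcd p n = 1 := (hp.coprime_iff_not_dvd).mpr hn
    have hb := Nat.gcd_eq_gcd_ab p n
    rw [hg] at hb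
    have h1 : (1 : K) = (p : K) * ((Nat.gcdA p n : ℤ) : K)
        + (n : K) * ((Nat.gcdB p n : ℤ) : K) := by
      have := congrArg (fun z : ℤ => (z : K)) hb
      push_cast at this
      simpa using this
    have h2 : (1:ℝ) ≤ max (‖(p:K)‖ * ‖((Nat.gcdA p n : ℤ):K)‖)
        (‖(n:K)‖ * ‖((Nat.gcdB p n : ℤ):K)‖) := by
      calc (1:ℝ) = ‖(1:K)‖ := norm_one.symm
        _ = ‖(p : K) * ((Nat.gcdA p n : ℤ) : K) + (n : K) * ((Nat.gcdB p n : ℤ) : K)‖ := by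
            rw [← h1]
        _ ≤ max ‖(p : K) * ((Nat.gcdA p n : ℤ) : K)‖ ‖(n : K) * ((Nat.gcdB p n : ℤ) : K)‖ :=
            hna _ _
        _ = _ := by rw [norm_mul, norm_mul]
    have hA : ‖(p : K)‖ * ‖((Nat.gcdA p n : ℤ) : K)‖ < 1 := by
      rw [hpnorm]
      have h3 := IsUltrametricDist.norm_intCast_le_one K (Nat.gcdA p n)
      have h4 : (0:ℝ) ≤ ‖((Nat.gcdA p n : ℤ) : K)‖ := norm_nonneg _
      have h5 : ((p:ℝ))⁻¹ < 1 := by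
        rw [inv_lt_one_iff₀]; right; exact hp1
      have h6 : (0:ℝ) ≤ ((p:ℝ))⁻¹ := by positivity
      calc ((p:ℝ))⁻¹ * ‖((Nat.gcdA p n : ℤ) : K)‖ ≤ ((p:ℝ))⁻¹ * 1 :=
            mul_le_mul_of_nonneg_left h3 h6
        _ < 1 := by linarith
    have hB : ‖(n : K)‖ * ‖((Nat.gcdB p n : ℤ) : K)‖ < 1 := by
      have h3 := IsUltrametricDist.norm_intCast_le_one K (Nat.gcdB p n)
      have h4 : (0:ℝ) ≤ ‖((Nat.gcdB p n : ℤ) : K)‖ := norm_nonneg _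
      have h6 : (0:ℝ) ≤ ‖(n : K)‖ := norm_nonneg _
      nlinarith
    exact absurd h2 (not_le.mpr (max_lt hA hB))
  -- norm of a nonzero natural number
  have hnorm_nat : ∀ n : ℕ, n ≠ 0 → ‖(n : K)‖ = ((p:ℝ))⁻¹ ^ (padicValNat p n) := by
    intro n hn0
    set v := padicValNat p n with hvdef
    obtain ⟨m, hm⟩ : p ^ v ∣ n := pow_padicValNat_dvd
    have hmd : ¬ p ∣ m := by
      rintro ⟨m', hm'⟩
      have hnd := pow_succ_padicValNat_not_dvd (p := p) hn0
      rw [← hvdef] at hnd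
      exact hnd ⟨m', by rw [hm, hm']; ring⟩
    have hcast : ((n : ℕ) : K) = ((p : K) ^ v) * (m : K) := by
      rw [hm]; push_cast; ring
    rw [hcast, norm_mul, norm_pow, hpnorm, hcop m hmd, mul_one]
  -- norm bound on γ j
  have hγb : ∀ j, ‖γ j‖ ≤ (p:ℝ) ^ (-(1:ℝ)/((p:ℝ)-1)) := by
    intro j
    rw [hγ j]
    apply IsUltrametricDist.norm_sum_le_of_forall_le_of_nonneg
      (Real.rpow_pos_of_pos hp0 _).le
    intro n _
    have hP : (1:ℝ) + n * ((p:ℝ)-1) ≤ ((p ^ n : ℕ):ℝ) := by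
      push_cast
      have := one_add_mul_le_pow (a := (p:ℝ) - 1) (by linarith) n
      calc (1:ℝ) + n * ((p:ℝ)-1) ≤ (1 + ((p:ℝ)-1)) ^ n := by simpa using this
        _ = (p:ℝ) ^ n := by ring_nf
    have hpn : ‖(p : K) ^ n‖ = (p:ℝ) ^ (-(n:ℝ)) := by
      rw [norm_pow, hpnorm, ← Real.rpow_natCast ((p:ℝ)⁻¹) n, ← Real.rpow_neg_one (p:ℝ),
        ← Real.rpow_mul hp0.le]
      norm_num
    rw [norm_div, norm_pow, hγ₀, hpn, ← Real.rpow_natCast ((p:ℝ) ^ (-(1:ℝ)/((p:ℝ)-1))) (p ^ n),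
      ← Real.rpow_mul hp0.le, ← Real.rpow_sub hp0]
    apply Real.rpow_le_rpow_of_exponent_le hp1.le
    set P : ℝ := ((p ^ n : ℕ):ℝ) with hPdef
    have key : (n:ℝ) * ((p:ℝ)-1) ≤ P - 1 := by linarith
    have hnum : (0:ℝ) ≤ (P - 1 - (n:ℝ)*((p:ℝ)-1)) / ((p:ℝ)-1) :=
      div_nonneg (by linarith) hps.le
    have hid : -1/((p:ℝ)-1) - (-1/((p:ℝ)-1) * P - -(n:ℝ))
        = (P - 1 - (n:ℝ)*((p:ℝ)-1))/((p:ℝ)-1) := by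
      field_simp
      ring
    linarith [hnum, hid]
  -- digit sum facts
  have hsk_le : ∀ k : ℕ, s k ≤ k := fun k => by rw [hs]; exact Nat.digit_sum_le p k
  have hsub : ∀ m n : ℕ, s (m + n) ≤ s m + s n := by
    intro m n
    have h1 := sub_one_mul_padicValNat_factorial (p := p) m
    have h2 := sub_one_mul_padicValNat_factorial (p := p) n
    have h3 := sub_one_mul_padicValNat_factorial (p := p) (m + n)
    rw [← hs] at h1 h2 h3
    obtain ⟨t, ht⟩ := Nat.factorial_mul_factorial_dvd_factorial_add m n
    have ht0 : t ≠ 0 := by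
      rintro rfl
      simp at ht
      exact Nat.factorial_ne_zero (m + n) ht
    have hv : padicValNat p (m.factorial) + padicValNat p (n.factorial)
        ≤ padicValNat p ((m + n).factorial) := by
      rw [ht, padicValNat.mul (Nat.mul_ne_zero (Nat.factorial_ne_zero m)
        (Nat.factorial_ne_zero n)) ht0,
        padicValNat.mul (Nat.factorial_ne_zero m) (Nat.factorial_ne_zero n)]
      omega
    have e1 : (p - 1) * (padicValNat p (m.factorial) + padicValNat p (n.factorial))
        ≤ (p - 1) * padicValNat p ((m + n).factorial) := Nat.mul_le_mul_left _ hv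
    rw [Nat.mul_add, h1, h2, h3] at e1
    have := hsk_le m; have := hsk_le n; have := hsk_le (m + n)
    omega
  have hspow : ∀ j k : ℕ, s (p ^ j * k) = s k := by
    intro j k
    rcases Nat.eq_zero_or_pos k with rfl | hk
    · simp
    · rw [hs, hs, Nat.digits_base_pow_mul hp.one_lt hk, List.sum_append]
      simp
  have hsum_le : ∀ (f : Fin (J+1) → ℕ) (t : Finset (Fin (J+1))),
      s (∑ j ∈ t, f j) ≤ ∑ j ∈ t, s (f j) := by
    intro f t
    induction t using Finset.cons_induction with
    | empty => simp [hs]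
    | cons a t ha ih =>
      rw [Finset.sum_cons, Finset.sum_cons]
      exact (hsub _ _).trans (by omega)
  -- per-factor bound
  have hterm : ∀ (j k : ℕ), ‖γ j ^ k / ((k.factorial : ℕ) : K)‖
      ≤ (p:ℝ) ^ (-((s k:ℝ)) / ((p:ℝ)-1)) := by
    intro j k
    have hfv : ((p:ℝ) - 1) * (padicValNat p k.factorial : ℝ) = (k:ℝ) - (s k:ℝ) := by
      have h := sub_one_mul_padicValNat_factorial (p := p) k
      rw [← hs] at h
      obtain ⟨a, ha⟩ : ∃ a, (p - 1) * padicValNat p k.factorial = a := ⟨_, rfl⟩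
      rw [ha] at h
      have h' : ((p - 1 : ℕ) : ℝ) * (padicValNat p k.factorial : ℝ) = (a : ℝ) := by
        exact_mod_cast congrArg (fun x : ℕ => (x:ℝ)) ha
      have h'' : (a : ℝ) = (k:ℝ) - (s k:ℝ) := by
        have hk := hsk_le k
        have : a + s k = k := by omega
        have := congrArg (fun x : ℕ => (x:ℝ)) this
        push_cast at this
        linarith
      rw [Nat.cast_sub hp.one_lt.le] at h'
      push_cast at h'
      linarith
    have hfn : ‖((k.factorial : ℕ) : K)‖
        = (p:ℝ) ^ (-((padicValNat p k.factorial : ℕ):ℝ)) := by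
      rw [hnorm_nat _ (Nat.factorial_ne_zero k),
        ← Real.rpow_natCast ((p:ℝ)⁻¹) _, ← Real.rpow_neg_one (p:ℝ), ← Real.rpow_mul hp0.le]
      norm_num
    have h1 : ‖γ j ^ k‖ ≤ (p:ℝ) ^ (-(k:ℝ)/((p:ℝ)-1)) := by
      rw [norm_pow]
      calc ‖γ j‖ ^ k ≤ ((p:ℝ) ^ (-(1:ℝ)/((p:ℝ)-1))) ^ k :=
            pow_le_pow_left₀ (norm_nonneg _) (hγb j) k
        _ = (p:ℝ) ^ (-(k:ℝ)/((p:ℝ)-1)) := by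
            rw [← Real.rpow_natCast ((p:ℝ) ^ (-(1:ℝ)/((p:ℝ)-1))) k, ← Real.rpow_mul hp0.le]
            ring_nf
    rw [norm_div, hfn, div_le_iff₀ (Real.rpow_pos_of_pos hp0 _)]
    calc ‖γ j ^ k‖ ≤ (p:ℝ) ^ (-(k:ℝ)/((p:ℝ)-1)) := h1
      _ = (p:ℝ) ^ (-((s k:ℝ)) / ((p:ℝ)-1))
          * (p:ℝ) ^ (-((padicValNat p k.factorial : ℕ):ℝ)) := by
          rw [← Real.rpow_add hp0]
          congr 1
          have hveq : (padicValNat p k.factorial : ℝ) = ((k:ℝ) - (s k:ℝ))/((p:ℝ)-1) := by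
            rw [eq_div_iff hd0]; linarith [hfv]
          rw [hveq]
          field_simp
          ring
  -- final assembly
  rw [hc]
  apply IsUltrametricDist.norm_sum_le_of_forall_le_of_nonneg
    (Real.rpow_pos_of_pos hp0 _).le
  intro k _
  split_ifs with hki
  · calc ‖∏ j : Fin (J+1), γ (j:ℕ) ^ ((k j : ℕ)) / (((k j : ℕ).factorial : ℕ) : K)‖
        = ∏ j : Fin (J+1), ‖γ (j:ℕ) ^ ((k j : ℕ)) / (((k j : ℕ).factorial : ℕ) : K)‖ :=
          norm_prod _ _
      _ ≤ ∏ j : Fin (J+1), (p:ℝ) ^ (-((s (k j : ℕ):ℝ)) / ((p:ℝ)-1)) :=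
          Finset.prod_le_prod (fun _ _ => norm_nonneg _) (fun j _ => hterm _ _)
      _ = (p:ℝ) ^ (∑ j : Fin (J+1), -((s (k j : ℕ):ℝ)) / ((p:ℝ)-1)) :=
          (Real.rpow_sum_of_pos hp0 _ _).symm
      _ ≤ (p:ℝ) ^ (-((s i : ℝ) / ((p : ℝ) - 1))) := by
          apply Real.rpow_le_rpow_of_exponent_le hp1.le
          have hN : s i ≤ ∑ j : Fin (J+1), s (k j : ℕ) := by
            have h1 := hsum_le (fun j => p ^ (j:ℕ) * (k j : ℕ)) Finset.univ
            rw [hki] at h1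
            refine h1.trans (le_of_eq ?_)
            exact Finset.sum_congr rfl fun j _ => hspow _ _
          have hNR : (s i : ℝ) ≤ ∑ j : Fin (J+1), (s (k j : ℕ) : ℝ) := by
            exact_mod_cast hN
          calc ∑ j : Fin (J+1), -((s (k j : ℕ):ℝ)) / ((p:ℝ)-1)
              = -(∑ j : Fin (J+1), (s (k j : ℕ):ℝ)) / ((p:ℝ)-1) := by
                rw [← Finset.sum_div, ← Finset.sum_neg_distrib]
            _ ≤ -((s i : ℝ)) / ((p:ℝ)-1) := by gcongr
            _ = -((s i : ℝ) / ((p : ℝ) - 1)) := by ring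
  · simp only [norm_zero]
    exact (Real.rpow_pos_of_pos hp0 _).le
end

section
/- (Scalar core of Lemma 5.7.) With γ_0 as in the context, for every integer μ ≥ 0 one has |γ_0^{(p−1)(μ+1)} − (−p)^{μ+1}| ≤ p^{−(μ+2)}; that is, γ_0^{(p−1)(μ+1)} ≡ (−p)^{μ+1} modulo elements of absolute value at most p^{−(μ+2)}. (This gives the congruence (−p)^{μ+1}H(Λ) ≡ θ_{−(p−1)b}(Λ) mod p^{μ+2} coefficient by coefficient.) -/
open Finset

private lemma geom_aux (p : ℕ) (hp : 1 ≤ p) (j : ℕ) :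
    1 + (p - 1) * ∑ t ∈ range j, p ^ t = p ^ j := by
  obtain ⟨q, rfl⟩ : ∃ q, p = q + 1 := ⟨p - 1, by omega⟩
  induction j with
  | zero => simp
  | succ n ih =>
    rw [sum_range_succ, Nat.mul_add, ← add_assoc, ih, pow_succ]
    simp only [Nat.add_sub_cancel]
    ring

private lemma sum_lb (p i : ℕ) (hp : 2 ≤ p) :
    i + 3 ≤ ∑ t ∈ range (i + 2), p ^ t := by
  induction i with
  | zero =>
    simp [sum_range_succ]
    omega
  | succ n ih =>
    rw [sum_range_succ]
    have h1 : 1 ≤ p ^ (n + 2) := Nat.one_le_pow _ _ (by omega)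
    omega

/-- Scalar core of Lemma 5.7: for every `μ ≥ 0`,
`|γ₀^{(p−1)(μ+1)} − (−p)^{μ+1}| ≤ p^{−(μ+2)}`. -/
theorem stmt_12 (p : ℕ) (hp : p.Prime)
    (K : Type*) [NormedField K] [CompleteSpace K] [CharZero K]
    (hna : ∀ x y : K, ‖x + y‖ ≤ max ‖x‖ ‖y‖)
    (hpnorm : ‖(p : K)‖ = ((p : ℝ))⁻¹)
    (γ₀ : K) (hγ₀ : ‖γ₀‖ = (p : ℝ) ^ (-(1 : ℝ) / ((p : ℝ) - 1)))
    (hroot : HasSum (fun i : ℕ => γ₀ ^ p ^ i / (p : K) ^ i) 0)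
    (μ : ℕ) :
    ‖γ₀ ^ ((p - 1) * (μ + 1)) - (-(p : K)) ^ (μ + 1)‖ ≤ ((p : ℝ) ^ (μ + 2))⁻¹ := by
  haveI : IsUltrametricDist K :=
    IsUltrametricDist.isUltrametricDist_of_forall_norm_add_le_max_norm hna
  have hp2 : 2 ≤ p := hp.two_le
  have hpR : (1 : ℝ) < (p : ℝ) := by exact_mod_cast hp.one_lt
  have hpR0 : (0 : ℝ) < (p : ℝ) := by linarith
  have hpK : (p : K) ≠ 0 := by
    exact_mod_cast (Nat.cast_ne_zero (R := K)).2 hp.pos.ne'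
  have hγpos : (0:ℝ) < ‖γ₀‖ := by
    rw [hγ₀]; exact Real.rpow_pos_of_pos hpR0 _
  have hγne : γ₀ ≠ 0 := by
    intro h; rw [h, norm_zero] at hγpos; exact lt_irrefl _ hγpos
  -- ‖γ₀‖ ^ (p-1) = p⁻¹
  have hnormpow : ‖γ₀‖ ^ (p - 1) = (p : ℝ)⁻¹ := by
    have hcast : ((p - 1 : ℕ) : ℝ) = (p : ℝ) - 1 := by
      have : (1:ℕ) ≤ p := hp.one_lt.le
      push_cast [this]; ring
    rw [hγ₀, ← Real.rpow_natCast ((p:ℝ) ^ (-(1:ℝ)/((p:ℝ)-1))) (p-1),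
      ← Real.rpow_mul hpR0.le, hcast]
    have hne : (p : ℝ) - 1 ≠ 0 := by linarith
    rw [div_mul_cancel₀ _ hne]
    simp [Real.rpow_neg_one]
  -- key step: ‖γ₀^(p-1) + p‖ ≤ p⁻²
  set a : K := γ₀ ^ (p - 1) with ha
  have hanorm : ‖a‖ = (p : ℝ)⁻¹ := by rw [ha, norm_pow, hnormpow]
  have key : ‖a + (p : K)‖ ≤ ((p : ℝ) ^ 2)⁻¹ := by
    set g : ℕ → K := fun i => (p : K) / γ₀ * (γ₀ ^ p ^ i / (p : K) ^ i) with hg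
    have hgsum : HasSum g 0 := by
      simpa using hroot.mul_left ((p : K) / γ₀)
    have hsplit : ∑ i ∈ range 2, g i + ∑' i, g (i + 2) = 0 := by
      rw [Summable.sum_add_tsum_nat_add 2 hgsum.summable, hgsum.tsum_eq]
    have hg0 : g 0 = (p : K) := by
      simp [hg, div_mul_div_comm, pow_one]
      field_simp
    have hg1 : g 1 = a := by
      have hps : γ₀ ^ (p ^ 1) = a * γ₀ := by
        rw [ha, ← pow_succ, pow_one]
        congr 1
        omega
      show (p : K) / γ₀ * (γ₀ ^ p ^ 1 / (p : K) ^ 1) = a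
      rw [hps, pow_one]
      field_simp
    have hsum2 : ∑ i ∈ range 2, g i = (p : K) + a := by
      rw [Finset.sum_range_succ, Finset.sum_range_one, hg0, hg1]
    have heq : a + (p : K) = -∑' i, g (i + 2) := by
      have := hsplit
      rw [hsum2] at this
      linear_combination this
    rw [heq, norm_neg]
    refine IsUltrametricDist.norm_tsum_le_of_forall_le_of_nonneg (by positivity) fun i => ?_
    -- bound each tail term
    set m := ∑ t ∈ range (i + 2), p ^ t with hm
    have hmge : (i + 2) + 1 ≤ m := by
      have := sum_lb p i hp2
      omega
    have hpow : γ₀ ^ p ^ (i + 2) = γ₀ * (γ₀ ^ (p - 1)) ^ m := by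
      conv_lhs => rw [← geom_aux p hp.one_lt.le (i + 2), ← hm]
      rw [pow_add, pow_one, pow_mul]
    have hgj : g (i + 2) = (γ₀ ^ (p - 1)) ^ m * (p : K) / (p : K) ^ (i + 2) := by
      show (p : K) / γ₀ * (γ₀ ^ p ^ (i + 2) / (p : K) ^ (i + 2)) = _
      rw [hpow]
      field_simp
    rw [hgj]
    simp only [norm_div, norm_mul, norm_pow, hnormpow, hpnorm]
    obtain ⟨d, hd⟩ : ∃ d, m = (i + 2) + 1 + d := ⟨m - (i + 3), by omega⟩
    have hinv0 : (0:ℝ) < (p:ℝ)⁻¹ := by positivity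
    have hkey : ((p:ℝ)⁻¹) ^ m * (p:ℝ)⁻¹ / ((p:ℝ)⁻¹) ^ (i + 2) = ((p:ℝ)⁻¹) ^ (d + 2) := by
      rw [hd, pow_add, pow_add, pow_one]
      field_simp
      rw [one_div, pow_add, mul_left_comm, ← mul_pow, mul_inv_cancel₀ hpR0.ne', one_pow, mul_one]
    rw [hkey]
    have h1 : (p:ℝ)⁻¹ ≤ 1 := by
      rw [inv_le_one₀ hpR0]
      exact hpR.le
    rw [← inv_pow]
    exact pow_le_pow_of_le_one hinv0.le h1 (Nat.le_add_left 2 d)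
  -- now the induction on μ
  have hab : ∀ n : ℕ, ‖a ^ (n + 1) - (-(p : K)) ^ (n + 1)‖ ≤ ((p : ℝ) ^ (n + 2))⁻¹ := by
    intro n
    induction n with
    | zero => simpa [sub_neg_eq_add] using key
    | succ n ih =>
      have hsplit : a ^ (n + 2) - (-(p : K)) ^ (n + 2)
          = a ^ (n + 1) * (a + (p : K)) + (a ^ (n + 1) - (-(p : K)) ^ (n + 1)) * (-(p : K)) := by
        ring
      rw [hsplit]
      refine le_trans (hna _ _) (max_le ?_ ?_)
      · rw [norm_mul, norm_pow, hanorm]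
        calc ((p : ℝ)⁻¹) ^ (n + 1) * ‖a + (p : K)‖
            ≤ ((p : ℝ)⁻¹) ^ (n + 1) * ((p : ℝ) ^ 2)⁻¹ := by
              apply mul_le_mul_of_nonneg_left key (by positivity)
          _ = ((p : ℝ) ^ (n + 3))⁻¹ := by
              rw [inv_pow, ← mul_inv, ← pow_add]
      · rw [norm_mul, norm_neg, hpnorm]
        calc ‖a ^ (n + 1) - (-(p : K)) ^ (n + 1)‖ * (p : ℝ)⁻¹
            ≤ ((p : ℝ) ^ (n + 2))⁻¹ * (p : ℝ)⁻¹ := by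
              apply mul_le_mul_of_nonneg_right ih (by positivity)
          _ = ((p : ℝ) ^ (n + 3))⁻¹ := by
              rw [← mul_inv, ← pow_succ]
  rw [pow_mul]
  exact hab μ
end

section
/- (Chain construction (7.22)–(7.25) from the proof of Proposition 7.16.) Let p be a prime and a ≥ 1 an integer. Let w ∈ U and let u^{(0)},…,u^{(a−1)} ∈ ℕ^{n+2} each satisfy Σ_{i=0}^n u^{(k)}_i = d·u^{(k)}_{n+1}, with Σ_{k=0}^{a−1} p^k·u^{(k)} = (p^a − 1)·w. Then there exist w^{(0)}, w^{(1)}, …, w^{(a)} ∈ U such that w^{(0)} = w^{(a)} = w and u^{(k)} = p·w^{(k+1)} − w^{(k)} for every 0 ≤ k ≤ a−1; consequently Σ_{k=0}^{a−1} u^{(k)} = (p−1)·Σ_{k=0}^{a−1} w^{(k)}. -/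
open Finset

/-- Chain construction (7.22)–(7.25) from the proof of Proposition 7.16.  With
`U = {w ∈ ℤ^{n+2} : w_i ≥ 1 ∀i, Σ_{i=0}^n w_i = d·w_{n+1}}`, given `w ∈ U` and
`u^{(0)},…,u^{(a−1)} ∈ ℕ^{n+2}` with `Σ_{i=0}^n u^{(k)}_i = d·u^{(k)}_{n+1}` and
`Σ_k p^k u^{(k)} = (p^a − 1)·w`, there exist `w^{(0)},…,w^{(a)} ∈ U` with
`w^{(0)} = w^{(a)} = w` and `u^{(k)} = p·w^{(k+1)} − w^{(k)}` for all `k`; consequently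
`Σ_k u^{(k)} = (p−1)·Σ_{k=0}^{a−1} w^{(k)}`. -/
theorem stmt_15 (d μ n : ℕ) (hd : 1 ≤ d) (hdμ : n + 1 = d * (μ + 1))
    (p : ℕ) (hp : p.Prime) (a : ℕ) (ha : 1 ≤ a)
    (w : Fin (n + 2) → ℤ) (hw1 : ∀ i, 1 ≤ w i)
    (hwsum : ∑ i : Fin (n + 1), w i.castSucc = d * w (Fin.last (n + 1)))
    (u : Fin a → Fin (n + 2) → ℕ)
    (husum : ∀ k, ∑ i : Fin (n + 1), u k i.castSucc = d * u k (Fin.last (n + 1)))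
    (hrel : ∀ i : Fin (n + 2), ∑ k : Fin a, (p : ℤ) ^ (k : ℕ) * (u k i : ℤ)
      = ((p : ℤ) ^ a - 1) * w i) :
    ∃ W : Fin (a + 1) → Fin (n + 2) → ℤ,
      (∀ m, (∀ i, 1 ≤ W m i) ∧
        ∑ i : Fin (n + 1), W m i.castSucc = d * W m (Fin.last (n + 1))) ∧
      W 0 = w ∧ W (Fin.last a) = w ∧
      (∀ k : Fin a, ∀ i : Fin (n + 2), (u k i : ℤ) = p * W k.succ i - W k.castSucc i) ∧
      (∀ i : Fin (n + 2), (∑ k : Fin a, (u k i : ℤ))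
        = ((p : ℤ) - 1) * ∑ k : Fin a, W k.castSucc i) := by
  have hppos : (0:ℤ) < (p:ℤ) := by exact_mod_cast hp.pos
  -- extend u to ℕ-indexed family
  set u' : ℕ → Fin (n + 2) → ℤ :=
    fun k i => if h : k < a then (u ⟨k, h⟩ i : ℤ) else 0 with hu'def
  have hu'nonneg : ∀ k i, 0 ≤ u' k i := by
    intro k i; simp only [hu'def]; split <;> positivity
  have hu'fin : ∀ (k : Fin a) (i), u' (k : ℕ) i = (u k i : ℤ) := by
    intro k i; simp [hu'def, k.isLt]
  -- partial sums
  set X : ℕ → Fin (n + 2) → ℤ :=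
    fun m i => w i + ∑ k ∈ Finset.range m, (p:ℤ) ^ k * u' k i with hXdef
  have hfin : ∀ i, ∑ k ∈ Finset.range a, (p:ℤ) ^ k * u' k i
      = ∑ k : Fin a, (p:ℤ) ^ (k : ℕ) * (u k i : ℤ) := by
    intro i
    rw [← Fin.sum_univ_eq_sum_range (fun k => (p:ℤ) ^ k * u' k i) a]
    exact Finset.sum_congr rfl fun k _ => by rw [hu'fin]
  have hXa : ∀ i, X a i = (p:ℤ) ^ a * w i := by
    intro i
    simp only [hXdef]
    rw [hfin i, hrel i]; ring
  have hXsucc : ∀ m i, X (m + 1) i = X m i + (p:ℤ) ^ m * u' m i := by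
    intro m i
    simp only [hXdef, Finset.sum_range_succ]; ring
  -- divisibility
  have hdvd : ∀ m, m ≤ a → ∀ i, (p:ℤ) ^ m ∣ X m i := by
    intro m hm i
    have hsplit : ∑ k ∈ Finset.range m, (p:ℤ) ^ k * u' k i
        + ∑ k ∈ Finset.Ico m a, (p:ℤ) ^ k * u' k i
        = ∑ k ∈ Finset.range a, (p:ℤ) ^ k * u' k i :=
      Finset.sum_range_add_sum_Ico _ hm
    have h1 : (p:ℤ) ^ m ∣ ∑ k ∈ Finset.Ico m a, (p:ℤ) ^ k * u' k i := by
      refine Finset.dvd_sum fun k hk => ?_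
      exact Dvd.dvd.mul_right (pow_dvd_pow _ (Finset.mem_Ico.mp hk).1) _
    have h2 : (p:ℤ) ^ m ∣ X a i := by
      rw [hXa i]
      exact Dvd.dvd.mul_right (pow_dvd_pow _ hm) _
    have : X m i = X a i - ∑ k ∈ Finset.Ico m a, (p:ℤ) ^ k * u' k i := by
      simp only [hXdef] at *
      linarith [hsplit]
    rw [this]
    exact dvd_sub h2 h1
  -- the chain
  refine ⟨fun m i => X (m : ℕ) i / (p:ℤ) ^ (m : ℕ), ?_, ?_, ?_, ?_, ?_⟩
  case _ =>
    -- membership in U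
    have hWX : ∀ (m : Fin (a+1)) i,
        (p:ℤ) ^ (m : ℕ) * (X (m : ℕ) i / (p:ℤ) ^ (m : ℕ)) = X (m : ℕ) i := by
      intro m i
      exact Int.mul_ediv_cancel' (hdvd m (Nat.lt_succ_iff.mp m.isLt) i)
    intro m
    constructor
    · intro i
      have hXpos : 1 ≤ X (m : ℕ) i := by
        have : 0 ≤ ∑ k ∈ Finset.range (m : ℕ), (p:ℤ) ^ k * u' k i :=
          Finset.sum_nonneg fun k _ => mul_nonneg (by positivity) (hu'nonneg k i)
        simp only [hXdef]
        linarith [hw1 i]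
      nlinarith [hWX m i, pow_pos hppos (m : ℕ)]
    · have key : (p:ℤ) ^ (m : ℕ) * ∑ i : Fin (n + 1), X (m : ℕ) i.castSucc / (p:ℤ) ^ (m : ℕ)
          = (p:ℤ) ^ (m : ℕ) * ((d : ℤ) * (X (m : ℕ) (Fin.last (n+1)) / (p:ℤ) ^ (m : ℕ))) := by
        rw [Finset.mul_sum]
        have h1 : ∀ i : Fin (n+1),
            (p:ℤ) ^ (m : ℕ) * (X (m : ℕ) i.castSucc / (p:ℤ) ^ (m : ℕ)) = X (m : ℕ) i.castSucc :=
          fun i => hWX m i.castSucc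
        rw [Finset.sum_congr rfl fun i _ => h1 i]
        have h2 : (p:ℤ) ^ (m : ℕ) * ((d:ℤ) * (X (m : ℕ) (Fin.last (n+1)) / (p:ℤ) ^ (m : ℕ)))
            = (d:ℤ) * X (m : ℕ) (Fin.last (n+1)) := by
          rw [mul_left_comm, hWX m (Fin.last (n+1))]
        rw [h2]
        -- now prove ∑ X = d * X last
        simp only [hXdef]
        rw [Finset.sum_add_distrib, mul_add, hwsum]
        congr 1
        rw [Finset.sum_comm]
        rw [Finset.mul_sum]
        refine Finset.sum_congr rfl fun k _ => ?_
        rw [← Finset.mul_sum]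
        have hus : ∑ i : Fin (n+1), u' k i.castSucc = (d : ℤ) * u' k (Fin.last (n+1)) := by
          by_cases h : k < a
          · simp only [hu'def, dif_pos h]
            exact_mod_cast husum ⟨k, h⟩
          · simp [hu'def, dif_neg h]
        rw [hus]; ring
      exact mul_left_cancel₀ (pow_ne_zero _ (ne_of_gt hppos)) key
  case _ =>
    funext i
    simp [hXdef]
  case _ =>
    funext i
    show X a i / (p:ℤ) ^ a = w i
    rw [hXa i, Int.mul_ediv_cancel_left _ (pow_ne_zero _ (ne_of_gt hppos))]
  case _ =>
    intro k i
    have hks : ((k.succ : Fin (a+1)) : ℕ) = (k : ℕ) + 1 := rfl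
    have hkc : ((k.castSucc : Fin (a+1)) : ℕ) = (k : ℕ) := rfl
    have h1 : (p:ℤ) ^ ((k : ℕ) + 1) * (X ((k : ℕ) + 1) i / (p:ℤ) ^ ((k : ℕ) + 1))
        = X ((k : ℕ) + 1) i :=
      Int.mul_ediv_cancel' (hdvd _ k.isLt i)
    have h2 : (p:ℤ) ^ (k : ℕ) * (X (k : ℕ) i / (p:ℤ) ^ (k : ℕ)) = X (k : ℕ) i :=
      Int.mul_ediv_cancel' (hdvd _ (le_of_lt k.isLt) i)
    have h3 := hXsucc (k : ℕ) i
    rw [← hu'fin k i]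
    have key : (p:ℤ) ^ (k : ℕ) * (u' (k : ℕ) i)
        = (p:ℤ) ^ (k : ℕ) * ((p:ℤ) * (X ((k : ℕ) + 1) i / (p:ℤ) ^ ((k : ℕ) + 1))
            - X (k : ℕ) i / (p:ℤ) ^ (k : ℕ)) := by
      have : (p:ℤ) ^ (k : ℕ) * ((p:ℤ) * (X ((k : ℕ) + 1) i / (p:ℤ) ^ ((k : ℕ) + 1)))
          = (p:ℤ) ^ ((k : ℕ) + 1) * (X ((k : ℕ) + 1) i / (p:ℤ) ^ ((k : ℕ) + 1)) := by ring
      rw [mul_sub, this, h1, h2, h3]; ring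
    have h5 := mul_left_cancel₀ (pow_ne_zero (k : ℕ) (ne_of_gt hppos)) key
    exact h5
  case _ =>
    intro i
    -- use the already-established relation
    have hrel2 : ∀ k : Fin a, (u k i : ℤ)
        = (p:ℤ) * (X ((k.succ : Fin (a+1)) : ℕ) i / (p:ℤ) ^ ((k.succ : Fin (a+1)) : ℕ))
          - X ((k.castSucc : Fin (a+1)) : ℕ) i / (p:ℤ) ^ ((k.castSucc : Fin (a+1)) : ℕ) := by
      intro k
      have hks : ((k.succ : Fin (a+1)) : ℕ) = (k : ℕ) + 1 := rfl
      have hkc : ((k.castSucc : Fin (a+1)) : ℕ) = (k : ℕ) := rfl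
      have h1 : (p:ℤ) ^ ((k : ℕ) + 1) * (X ((k : ℕ) + 1) i / (p:ℤ) ^ ((k : ℕ) + 1))
          = X ((k : ℕ) + 1) i :=
        Int.mul_ediv_cancel' (hdvd _ k.isLt i)
      have h2 : (p:ℤ) ^ (k : ℕ) * (X (k : ℕ) i / (p:ℤ) ^ (k : ℕ)) = X (k : ℕ) i :=
        Int.mul_ediv_cancel' (hdvd _ (le_of_lt k.isLt) i)
      have h3 := hXsucc (k : ℕ) i
      rw [hks, hkc, ← hu'fin k i]
      have key : (p:ℤ) ^ (k : ℕ) * (u' (k : ℕ) i)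
          = (p:ℤ) ^ (k : ℕ) * ((p:ℤ) * (X ((k : ℕ) + 1) i / (p:ℤ) ^ ((k : ℕ) + 1))
              - X (k : ℕ) i / (p:ℤ) ^ (k : ℕ)) := by
        have : (p:ℤ) ^ (k : ℕ) * ((p:ℤ) * (X ((k : ℕ) + 1) i / (p:ℤ) ^ ((k : ℕ) + 1)))
            = (p:ℤ) ^ ((k : ℕ) + 1) * (X ((k : ℕ) + 1) i / (p:ℤ) ^ ((k : ℕ) + 1)) := by ring
        rw [mul_sub, this, h1, h2, h3]; ring
      exact mul_left_cancel₀ (pow_ne_zero (k : ℕ) (ne_of_gt hppos)) key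
    set V : Fin (a+1) → ℤ := fun m => X (m : ℕ) i / (p:ℤ) ^ (m : ℕ) with hVdef
    have hV0 : V 0 = w i := by simp [hVdef, hXdef]
    have hVl : V (Fin.last a) = w i := by
      have : ((Fin.last a : Fin (a+1)) : ℕ) = a := rfl
      simp only [hVdef, this, hXa i]
      exact Int.mul_ediv_cancel_left _ (pow_ne_zero _ (ne_of_gt hppos))
    have hsum1 : ∑ m : Fin (a+1), V m = V 0 + ∑ k : Fin a, V k.succ := Fin.sum_univ_succ V
    have hsum2 : ∑ m : Fin (a+1), V m = (∑ k : Fin a, V k.castSucc) + V (Fin.last a) :=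
      Fin.sum_univ_castSucc V
    have hsucc_eq : ∑ k : Fin a, V k.succ = ∑ k : Fin a, V k.castSucc := by
      rw [hV0] at hsum1; rw [hVl] at hsum2; linarith
    calc ∑ k : Fin a, (u k i : ℤ)
        = ∑ k : Fin a, ((p:ℤ) * V k.succ - V k.castSucc) :=
          Finset.sum_congr rfl fun k _ => hrel2 k
      _ = (p:ℤ) * ∑ k : Fin a, V k.succ - ∑ k : Fin a, V k.castSucc := by
          rw [Finset.sum_sub_distrib, Finset.mul_sum]
      _ = ((p:ℤ) - 1) * ∑ k : Fin a, V k.castSucc := by rw [hsucc_eq]; ring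
end

section
/- (Inequality (7.28) from the proof of Proposition 7.16.) Let p be a prime and a ≥ 1 an integer. Let w ∈ U and let u^{(0)},…,u^{(a−1)} ∈ ℕ^{n+2} each satisfy Σ_{i=0}^n u^{(k)}_i = d·u^{(k)}_{n+1}, with Σ_{k=0}^{a−1} p^k·u^{(k)} = (p^a − 1)·w. Then Σ_{k=0}^{a−1} u^{(k)}_{n+1} ≥ a(μ+1)(p−1), and equality holds if and only if u^{(k)} = (p−1)·(1,…,1,μ+1) for every k (in which case w = (1,…,1,μ+1)). -/
open Finset

lemma key_lemma (q : ℕ) (hq : 1 ≤ q) :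
    ∀ b : ℕ, ∀ c m : ℕ, 1 ≤ c → 1 ≤ m → ∀ u : ℕ → ℕ,
    (∑ k ∈ Finset.range (b + 1), (q + 1) ^ k * u k) + c = (q + 1) ^ (b + 1) * m →
    q * b + (q + 1) * m ≤ (∑ k ∈ Finset.range (b + 1), u k) + c ∧
    ((∑ k ∈ Finset.range (b + 1), u k) + c = q * b + (q + 1) * m →
      ∃ c' : ℕ → ℕ, c' 0 = c ∧ c' (b + 1) = m ∧ (∀ j, 1 ≤ j → j ≤ b → c' j = 1) ∧
        ∀ k ≤ b, u k + c' k = (q + 1) * c' (k + 1)) := by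
  intro b
  induction b with
  | zero =>
    intro c m hc hm u h
    simp only [Finset.sum_range_one, pow_zero, one_mul, zero_add, pow_one] at h
    rw [Finset.sum_range_one]
    refine ⟨by omega, fun _ => ⟨fun j => if j = 0 then c else m, rfl, rfl, by omega, ?_⟩⟩
    intro k hk
    interval_cases k
    simpa using h
  | succ b ih =>
    intro c m hc hm u h
    rw [Finset.sum_range_succ'] at h
    -- h : (∑ k ∈ range (b+1), (q+1)^(k+1) * u (k+1)) + (q+1)^0 * u 0 + c = (q+1)^(b+2) * m
    simp only [pow_zero, one_mul] at h
    rw [show b + 1 + 1 = b + 2 from rfl] at h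
    set p := q + 1 with hpdef
    have hp0 : 0 < p := by omega
    have hd1 : p ∣ ∑ k ∈ Finset.range (b + 1), p ^ (k + 1) * u (k + 1) :=
      Finset.dvd_sum fun k _ => Dvd.dvd.mul_right (dvd_pow_self p (Nat.succ_ne_zero k)) _
    have hd2 : p ∣ p ^ (b + 2) * m := Dvd.dvd.mul_right (dvd_pow_self p (by omega)) m
    have hdvd : p ∣ u 0 + c := by
      have : u 0 + c = p ^ (b + 2) * m - ∑ k ∈ Finset.range (b + 1), p ^ (k + 1) * u (k + 1) := by
        omega
      rw [this]
      exact Nat.dvd_sub hd2 hd1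
    obtain ⟨c1, hc1⟩ := hdvd
    have hc1pos : 1 ≤ c1 := by
      rcases Nat.eq_zero_or_pos c1 with rfl | h0
      · simp at hc1; omega
      · exact h0
    have hS : ∑ k ∈ Finset.range (b + 1), p ^ (k + 1) * u (k + 1)
        = p * ∑ k ∈ Finset.range (b + 1), p ^ k * u (k + 1) := by
      rw [Finset.mul_sum]
      exact Finset.sum_congr rfl fun k _ => by ring
    have h' : (∑ k ∈ Finset.range (b + 1), p ^ k * u (k + 1)) + c1 = p ^ (b + 1) * m := by
      have hmul : p * ((∑ k ∈ Finset.range (b + 1), p ^ k * u (k + 1)) + c1)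
          = p * (p ^ (b + 1) * m) := by
        have hx : p * (p ^ (b + 1) * m) = p ^ (b + 2) * m := by ring
        have hy : p * ((∑ k ∈ Finset.range (b + 1), p ^ k * u (k + 1)) + c1)
            = p * (∑ k ∈ Finset.range (b + 1), p ^ k * u (k + 1)) + p * c1 := by ring
        omega
      exact Nat.eq_of_mul_eq_mul_left hp0 hmul
    obtain ⟨hb', heq'⟩ := ih c1 m hc1pos hm (fun k => u (k + 1)) h'
    have e2 : q * 1 ≤ q * c1 := Nat.mul_le_mul_left q hc1pos
    have e3 : p * c1 = q * c1 + c1 := by rw [hpdef]; ring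
    have e4 : q * (b + 1) = q * b + q := by ring
    have hsumrw : ∑ k ∈ Finset.range (b + 1 + 1), u k
        = (∑ k ∈ Finset.range (b + 1), u (k + 1)) + u 0 := Finset.sum_range_succ' u (b + 1)
    constructor
    · rw [hsumrw]
      omega
    · intro heqtot
      rw [hsumrw] at heqtot
      have hqc1 : q * c1 = q * 1 := by omega
      have hc1eq : c1 = 1 := Nat.eq_of_mul_eq_mul_left (by omega) hqc1
      have hA : (∑ k ∈ Finset.range (b + 1), u (k + 1)) + c1 = q * b + p * m := by omega
      obtain ⟨c'', h0'', hB'', hmid'', hrec''⟩ := heq' hA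
      refine ⟨fun j => match j with | 0 => c | (j' + 1) => c'' j', rfl, hB'', ?_, ?_⟩
      · intro j hj1 hj2
        match j, hj1 with
        | (j' + 1), _ =>
          show c'' j' = 1
          rcases Nat.eq_zero_or_pos j' with rfl | hj0
          · rw [h0'']; exact hc1eq
          · exact hmid'' j' hj0 (by omega)
      · intro k hk
        match k with
        | 0 =>
          show u 0 + c = p * c'' 0
          rw [hc1, h0'']
        | (k' + 1) =>
          show u (k' + 1) + c'' k' = p * c'' (k' + 1)
          exact hrec'' k' (by omega)

lemma coord_lemma (q : ℕ) (hq : 1 ≤ q) (b m : ℕ) (hm : 1 ≤ m) (u : ℕ → ℕ)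
    (h : (∑ k ∈ Finset.range (b + 1), (q + 1) ^ k * u k) + m = (q + 1) ^ (b + 1) * m) :
    (b + 1) * q ≤ ∑ k ∈ Finset.range (b + 1), u k ∧
    ((∑ k ∈ Finset.range (b + 1), u k) = (b + 1) * q → m = 1 ∧ ∀ k ≤ b, u k = q) := by
  obtain ⟨h1, h2⟩ := key_lemma q hq b m m hm hm u h
  have ea : (q + 1) * m = q * m + m := by ring
  have eb : (b + 1) * q = q * b + q := by ring
  have ec : q * 1 ≤ q * m := Nat.mul_le_mul_left q hm
  constructor
  · omega
  · intro hs
    have hqm : q * m = q * 1 := by omega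
    have hm1 : m = 1 := Nat.eq_of_mul_eq_mul_left (by omega) hqm
    subst hm1
    obtain ⟨c', h0, hB, hmid, hrec⟩ := h2 (by omega)
    refine ⟨rfl, fun k hk => ?_⟩
    have hck : c' k = 1 := by
      rcases Nat.eq_zero_or_pos k with rfl | hk0
      · exact h0
      · exact hmid k hk0 hk
    have hck1 : c' (k + 1) = 1 := by
      rcases Nat.lt_or_ge k b with h' | h'
      · exact hmid (k + 1) (by omega) (by omega)
      · have : k = b := by omega
        rw [this]; exact hB
    have := hrec k hk
    rw [hck, hck1] at this
    omega


/-- Inequality (7.28) from the proof of Proposition 7.16.  With the setup of the chain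
construction, `Σ_{k=0}^{a−1} u^{(k)}_{n+1} ≥ a(μ+1)(p−1)`, with equality iff
`u^{(k)} = (p−1)·(1,…,1,μ+1)` for every `k`; and in the case of equality,
`w = (1,…,1,μ+1)`. -/
theorem stmt_16 (d μ n : ℕ) (hd : 1 ≤ d) (hdμ : n + 1 = d * (μ + 1))
    (p : ℕ) (hp : p.Prime) (a : ℕ) (ha : 1 ≤ a)
    (w : Fin (n + 2) → ℤ) (hw1 : ∀ i, 1 ≤ w i)
    (hwsum : ∑ i : Fin (n + 1), w i.castSucc = d * w (Fin.last (n + 1)))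
    (u : Fin a → Fin (n + 2) → ℕ)
    (husum : ∀ k, ∑ i : Fin (n + 1), u k i.castSucc = d * u k (Fin.last (n + 1)))
    (hrel : ∀ i : Fin (n + 2), ∑ k : Fin a, (p : ℤ) ^ (k : ℕ) * (u k i : ℤ)
      = ((p : ℤ) ^ a - 1) * w i) :
    a * (μ + 1) * (p - 1) ≤ (∑ k : Fin a, u k (Fin.last (n + 1))) ∧
      ((∑ k : Fin a, u k (Fin.last (n + 1))) = a * (μ + 1) * (p - 1) ↔
        ∀ k, u k = fun i : Fin (n + 2) =>
          if (i : ℕ) < n + 1 then p - 1 else (p - 1) * (μ + 1)) ∧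
      ((∑ k : Fin a, u k (Fin.last (n + 1))) = a * (μ + 1) * (p - 1) →
        w = fun i : Fin (n + 2) => if (i : ℕ) < n + 1 then 1 else ((μ : ℤ) + 1)) := by
  have hp2 := hp.two_le
  obtain ⟨q, rfl⟩ : ∃ q, p = q + 1 := ⟨p - 1, by omega⟩
  have hq1 : 1 ≤ q := by omega
  obtain ⟨b, rfl⟩ : ∃ b, a = b + 1 := ⟨a - 1, by omega⟩
  simp only [Nat.add_sub_cancel]
  -- natural-number data
  set U : Fin (n + 2) → ℕ → ℕ := fun i k => if h : k < b + 1 then u ⟨k, h⟩ i else 0 with hU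
  set m : Fin (n + 2) → ℕ := fun i => (w i).toNat with hm
  have hmw : ∀ i, (m i : ℤ) = w i := fun i => Int.toNat_of_nonneg (by linarith [hw1 i])
  have hm1 : ∀ i, 1 ≤ m i := by
    intro i
    have h1 : (1 : ℤ) ≤ (m i : ℤ) := by rw [hmw i]; exact hw1 i
    exact_mod_cast h1
  have hU2 : ∀ i, (∑ k ∈ Finset.range (b + 1), U i k) = ∑ k : Fin (b + 1), u k i := by
    intro i
    rw [← Fin.sum_univ_eq_sum_range (fun k => U i k) (b + 1)]
    exact Finset.sum_congr rfl fun k _ => by simp [hU, k.isLt, not_lt.mpr (Fin.is_le k)]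
  have hnat : ∀ i, (∑ k ∈ Finset.range (b + 1), (q + 1) ^ k * U i k) + m i
      = (q + 1) ^ (b + 1) * m i := by
    intro i
    have h2 := hrel i
    have hconv : (∑ k : Fin (b + 1), ((q + 1 : ℕ) : ℤ) ^ (k : ℕ) * (u k i : ℤ))
        = ((∑ k ∈ Finset.range (b + 1), (q + 1) ^ k * U i k : ℕ) : ℤ) := by
      push_cast
      rw [← Fin.sum_univ_eq_sum_range (fun k => ((q : ℤ) + 1) ^ k * (U i k : ℤ)) (b + 1)]
      exact Finset.sum_congr rfl fun k _ => by simp [hU, k.isLt, not_lt.mpr (Fin.is_le k)]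
    rw [hconv] at h2
    have h3 : ((∑ k ∈ Finset.range (b + 1), (q + 1) ^ k * U i k : ℕ) : ℤ) + (m i : ℤ)
        = (((q + 1) ^ (b + 1) * m i : ℕ) : ℤ) := by
      push_cast
      push_cast at h2
      rw [h2, ← hmw i]
      push_cast
      ring
    exact_mod_cast h3
  have hcoord := fun i => coord_lemma q hq1 b (m i) (hm1 i) (U i) (hnat i)
  have hUu : ∀ (i : Fin (n + 2)) (k : Fin (b + 1)), U i (k : ℕ) = u k i := by
    intro i k; simp [hU, k.isLt, not_lt.mpr (Fin.is_le k)]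
  -- bound on each coordinate in Fin-sum form
  have hbd : ∀ i : Fin (n + 2), (b + 1) * q ≤ ∑ k : Fin (b + 1), u k i := by
    intro i; rw [← hU2 i]; exact (hcoord i).1
  -- double sum identity
  have hswap : ∑ i : Fin (n + 1), ∑ k : Fin (b + 1), u k i.castSucc
      = d * ∑ k : Fin (b + 1), u k (Fin.last (n + 1)) := by
    rw [Finset.sum_comm]
    rw [Finset.sum_congr rfl fun k _ => husum k, ← Finset.mul_sum]
  have htot : (n + 1) * ((b + 1) * q) ≤ d * ∑ k : Fin (b + 1), u k (Fin.last (n + 1)) := by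
    rw [← hswap]
    calc (n + 1) * ((b + 1) * q) = ∑ _i : Fin (n + 1), (b + 1) * q := by
          rw [Finset.sum_const, Finset.card_univ, Fintype.card_fin, smul_eq_mul]
      _ ≤ _ := Finset.sum_le_sum fun i _ => hbd i.castSucc
  have hmain : (b + 1) * (μ + 1) * q ≤ ∑ k : Fin (b + 1), u k (Fin.last (n + 1)) := by
    refine Nat.le_of_mul_le_mul_left ?_ (show 0 < d by omega)
    calc d * ((b + 1) * (μ + 1) * q) = (n + 1) * ((b + 1) * q) := by rw [hdμ]; ring
      _ ≤ _ := htot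
  refine ⟨hmain, ?_, ?_⟩
  · constructor
    · intro heq
      -- each coordinate sum is exactly (b+1)*q
      have hsum_eq : ∑ i : Fin (n + 1), ∑ k : Fin (b + 1), u k i.castSucc
          = ∑ _i : Fin (n + 1), (b + 1) * q := by
        rw [hswap, heq, Finset.sum_const, Finset.card_univ, Fintype.card_fin, smul_eq_mul,
          hdμ]
        ring
      have heach : ∀ i : Fin (n + 1), ∑ k : Fin (b + 1), u k i.castSucc = (b + 1) * q := by
        intro i
        have := (Finset.sum_eq_sum_iff_of_le
          (fun (i : Fin (n + 1)) _ => hbd i.castSucc)).mp hsum_eq.symm i (Finset.mem_univ i)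
        exact this.symm
      have hcc : ∀ i : Fin (n + 1), m i.castSucc = 1 ∧ ∀ k ≤ b, U i.castSucc k = q := by
        intro i
        exact (hcoord i.castSucc).2 (by rw [hU2]; exact heach i)
      intro k
      funext i
      by_cases hi : (i : ℕ) < n + 1
      · simp only [if_pos hi]
        have hieq : (⟨(i : ℕ), hi⟩ : Fin (n + 1)).castSucc = i := by
          ext; rfl
        have := (hcc ⟨(i : ℕ), hi⟩).2 (k : ℕ) (by omega)
        rw [hieq, hUu] at this
        exact this
      · have hieq : i = Fin.last (n + 1) := by
          ext
          have := i.isLt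
          simp only [Fin.val_last]
          omega
        simp only [hieq, Fin.val_last, if_neg (lt_irrefl (n + 1))]
        have hs := husum k
        have : ∑ i : Fin (n + 1), u k i.castSucc = ∑ _i : Fin (n + 1), q := by
          refine Finset.sum_congr rfl fun i _ => ?_
          have := (hcc i).2 (k : ℕ) (by omega)
          rwa [hUu] at this
        rw [this, Finset.sum_const, Finset.card_univ, Fintype.card_fin, smul_eq_mul] at hs
        have : d * (q * (μ + 1)) = d * u k (Fin.last (n + 1)) := by
          rw [← hs, hdμ]; ring
        exact (Nat.eq_of_mul_eq_mul_left (by omega) this).symm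
    · intro hu
      have : ∀ k : Fin (b + 1), u k (Fin.last (n + 1)) = q * (μ + 1) := by
        intro k
        rw [hu k]
        simp
      rw [Finset.sum_congr rfl fun k _ => this k, Finset.sum_const, Finset.card_univ,
        Fintype.card_fin, smul_eq_mul]
      ring
  · intro heq
    have hsum_eq : ∑ i : Fin (n + 1), ∑ k : Fin (b + 1), u k i.castSucc
        = ∑ _i : Fin (n + 1), (b + 1) * q := by
      rw [hswap, heq, Finset.sum_const, Finset.card_univ, Fintype.card_fin, smul_eq_mul, hdμ]
      ring
    have heach : ∀ i : Fin (n + 1), ∑ k : Fin (b + 1), u k i.castSucc = (b + 1) * q := by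
      intro i
      exact ((Finset.sum_eq_sum_iff_of_le
        (fun (i : Fin (n + 1)) _ => hbd i.castSucc)).mp hsum_eq.symm i (Finset.mem_univ i)).symm
    have hcc : ∀ i : Fin (n + 1), m i.castSucc = 1 := by
      intro i
      exact ((hcoord i.castSucc).2 (by rw [hU2]; exact heach i)).1
    have hwc : ∀ i : Fin (n + 1), w i.castSucc = 1 := by
      intro i
      rw [← hmw i.castSucc, hcc i]
      norm_num
    funext i
    by_cases hi : (i : ℕ) < n + 1
    · simp only [if_pos hi]
      have hieq : (⟨(i : ℕ), hi⟩ : Fin (n + 1)).castSucc = i := by ext; rfl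
      rw [← hieq]
      exact hwc _
    · have hieq : i = Fin.last (n + 1) := by
        ext
        have := i.isLt
        simp only [Fin.val_last]
        omega
      simp only [hieq, Fin.val_last, if_neg (lt_irrefl (n + 1))]
      have hs := hwsum
      rw [Finset.sum_congr rfl fun i _ => hwc i, Finset.sum_const, Finset.card_univ,
        Fintype.card_fin, nsmul_eq_mul, mul_one] at hs
      have hdz : (d : ℤ) ≠ 0 := by exact_mod_cast (by omega : d ≠ 0)
      have : (d : ℤ) * ((μ : ℤ) + 1) = (d : ℤ) * w (Fin.last (n + 1)) := by
        rw [← hs]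
        exact_mod_cast (congrArg (fun x : ℕ => (x : ℤ)) hdμ).symm
      exact (mul_left_cancel₀ hdz this).symm
end
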